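/- arXiv:2307.01399 — 3 statements merged into one kernel-verified Lean document; each statement's English description precedes it below -/
import Mathlib

section
/- Let f be a probability density on ℝ and f_{μ,σ}(y) = (1/σ) f((y−μ)/σ) its location-scale family. Assume D(f_{0,1} ‖ f_{η,σ}) < ∞ for all η ∈ ℝ, σ ∈ (0,∞), that it is continuous in (η,σ), and that D(f_{0,1} ‖ f_{η,σ}) = O(η² + (1−σ)²) as (η,σ) → (0,1). Then for any J > 0 and any σ̄ > 1 with σ̲ = σ̄^{−1}, there exists a constant C̄ > 0 (depending on f, J, σ̄) such that D(f_{μ₁,σ₁} ‖ f_{μ₂,σ₂}) ≤ C̄ [(μ₁ − μ₂)² + (σ₁ − σ₂)²] for all μ₁, μ₂ ∈ [−J, J] and all σ₁, σ₂ ∈ [σ̲, σ̄]. -/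
open MeasureTheory Filter Asymptotics Topology

/-- The location-scale family `f_{η,σ}(y) = (1/σ) f((y-η)/σ)`. -/
noncomputable def locScale (f : ℝ → ℝ) (η σ : ℝ) : ℝ → ℝ := fun y => σ⁻¹ * f ((y - η) / σ)

/-- Kullback–Leibler divergence `D(q₁‖q₂) = ∫ q₁ log(q₁/q₂) dy` (Lebesgue measure). -/
noncomputable def klDiv (q₁ q₂ : ℝ → ℝ) : ℝ := ∫ y, q₁ y * Real.log (q₁ y / q₂ y)

/-- Change of variables: KL between two location-scale members reduces to KL against the
standard member. -/
lemma klDiv_locScale_aux (f : ℝ → ℝ) (μ₁ μ₂ σ₁ σ₂ : ℝ) (h₁ : 0 < σ₁) (h₂ : 0 < σ₂) :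
    klDiv (locScale f μ₁ σ₁) (locScale f μ₂ σ₂)
      = klDiv f (locScale f ((μ₂ - μ₁) / σ₁) (σ₂ / σ₁)) := by
  set η := (μ₂ - μ₁) / σ₁ with hη
  set σ := σ₂ / σ₁ with hσ
  set F : ℝ → ℝ := fun x => f x * Real.log (f x / locScale f η σ x) with hF
  have key : ∀ y : ℝ, locScale f μ₁ σ₁ y * Real.log (locScale f μ₁ σ₁ y / locScale f μ₂ σ₂ y)
      = σ₁⁻¹ • F ((y - μ₁)/σ₁) := by
    intro y
    have harg : ((y - μ₁)/σ₁ - η) / σ = (y - μ₂) / σ₂ := by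
      rw [hη, hσ]
      field_simp
      ring
    have hls : locScale f η σ ((y - μ₁)/σ₁) = (σ₁ / σ₂) * f ((y - μ₂)/σ₂) := by
      simp only [locScale, harg]
      rw [show (σ₂ / σ₁)⁻¹ = σ₁ / σ₂ by rw [inv_div]]
    have hratio : locScale f μ₁ σ₁ y / locScale f μ₂ σ₂ y
        = f ((y - μ₁)/σ₁) / locScale f η σ ((y - μ₁)/σ₁) := by
      rw [hls]
      simp only [locScale]
      rcases eq_or_ne (f ((y - μ₂)/σ₂)) 0 with h0 | h0
      · simp [h0]
      · field_simp
    rw [hF]; simp only [smul_eq_mul]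
    rw [hratio]; simp only [locScale]; ring
  unfold klDiv
  simp_rw [key]
  rw [integral_smul]
  have : (∫ y : ℝ, F ((y - μ₁) / σ₁)) = |σ₁| • ∫ x, F x := by
    have h1 : (∫ y : ℝ, F ((y - μ₁) / σ₁)) = ∫ y : ℝ, (fun z => F (z / σ₁)) (y - μ₁) := by
      simp
    rw [h1, integral_sub_right_eq_self (fun z => F (z / σ₁)) μ₁,
      MeasureTheory.Measure.integral_comp_div F σ₁]
  rw [this, smul_smul, abs_of_pos h₁, inv_mul_cancel₀ h₁.ne', one_smul]

/-- Compactness + Big-O: a continuous function which is `O(h)` at the unique zero of `h`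
inside a compact box is bounded by a constant multiple of `h` on the whole box. -/
lemma bigO_compact_bound (g : ℝ × ℝ → ℝ)
    (hcont : ContinuousOn g {θ : ℝ × ℝ | 0 < θ.2})
    (hO : g =O[𝓝 ((0 : ℝ), (1 : ℝ))] (fun θ : ℝ × ℝ => θ.1 ^ 2 + (1 - θ.2) ^ 2))
    (A s t : ℝ) (hs : 0 < s) :
    ∃ C : ℝ, 0 < C ∧ ∀ θ ∈ Set.Icc (-A) A ×ˢ Set.Icc s t,
      g θ ≤ C * (θ.1 ^ 2 + (1 - θ.2) ^ 2) := by
  set h : ℝ × ℝ → ℝ := fun θ => θ.1 ^ 2 + (1 - θ.2) ^ 2 with hh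
  have hhnn : ∀ θ, 0 ≤ h θ := fun θ => by positivity
  have hhcont : Continuous h := by fun_prop
  obtain ⟨c, hc, hbig⟩ := hO.exists_pos
  rw [IsBigOWith, Metric.eventually_nhds_iff] at hbig
  obtain ⟨ε, hε, hball⟩ := hbig
  set K : Set (ℝ × ℝ) := Set.Icc (-A) A ×ˢ Set.Icc s t with hK
  have hKc : IsCompact K := (isCompact_Icc).prod isCompact_Icc
  have hKsub : K ⊆ {θ : ℝ × ℝ | 0 < θ.2} := by
    rintro ⟨x, y⟩ ⟨_, hy⟩
    exact lt_of_lt_of_le hs hy.1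
  set K' : Set (ℝ × ℝ) := K \ Metric.ball ((0 : ℝ), (1 : ℝ)) ε with hK'
  have hK'c : IsCompact K' := hKc.diff Metric.isOpen_ball
  by_cases hne : K'.Nonempty
  · obtain ⟨θ₀, hθ₀K, hθ₀min⟩ := hK'c.exists_isMinOn hne hhcont.continuousOn
    have hθ₀pos : 0 < h θ₀ := by
      rcases (hhnn θ₀).lt_or_eq with hlt | heq
      · exact hlt
      · exfalso
        have heq' : θ₀.1 ^ 2 + (1 - θ₀.2) ^ 2 = 0 := by simpa [hh] using heq.symm
        have e1 : θ₀.1 = 0 := by nlinarith [sq_nonneg θ₀.1, sq_nonneg (1 - θ₀.2)]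
        have e2 : θ₀.2 = 1 := by nlinarith [sq_nonneg θ₀.1, sq_nonneg (1 - θ₀.2)]
        have : θ₀ = ((0 : ℝ), (1 : ℝ)) := Prod.ext e1 e2
        have := hθ₀K.2
        apply this
        rw [‹θ₀ = _›]
        exact Metric.mem_ball_self hε
    obtain ⟨M, hM⟩ := hK'c.exists_bound_of_continuousOn (hcont.mono (hK'.symm ▸ Set.diff_subset.trans hKsub))
    obtain ⟨C₀, hC₀⟩ : ∃ C₀ : ℝ, C₀ = max c (max M 0 / h θ₀) := ⟨_, rfl⟩
    set C := C₀ + 1 with hC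
    have hc0 : c ≤ C₀ := hC₀ ▸ le_max_left _ _
    have hM0 : max M 0 / h θ₀ ≤ C₀ := hC₀ ▸ le_max_right _ _
    have hCpos : 0 < C := by
      rw [hC]; linarith
    refine ⟨C, hCpos, ?_⟩
    intro θ hθ
    by_cases hmem : θ ∈ Metric.ball ((0 : ℝ), (1 : ℝ)) ε
    · have := hball (Metric.mem_ball.mp hmem)
      have hgle : g θ ≤ c * h θ := by
        calc g θ ≤ ‖g θ‖ := le_abs_self _
        _ ≤ c * ‖h θ‖ := this
        _ = c * h θ := by rw [Real.norm_eq_abs, abs_of_nonneg (hhnn θ)]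
      calc g θ ≤ c * h θ := hgle
      _ ≤ C * h θ := by
        apply mul_le_mul_of_nonneg_right _ (hhnn θ)
        linarith
    · have hθK' : θ ∈ K' := ⟨hθ, hmem⟩
      have hgle : g θ ≤ M := (le_abs_self _).trans (hM θ hθK')
      have hmin : h θ₀ ≤ h θ := hθ₀min hθK'
      calc g θ ≤ M := hgle
      _ ≤ max M 0 := le_max_left _ _
      _ = (max M 0 / h θ₀) * h θ₀ := by field_simp
      _ ≤ (max M 0 / h θ₀) * h θ := by
          apply mul_le_mul_of_nonneg_left hmin
          positivity
      _ ≤ C * h θ := by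
          apply mul_le_mul_of_nonneg_right _ (hhnn θ)
          linarith
  · refine ⟨c, hc, ?_⟩
    intro θ hθ
    have hmem : θ ∈ Metric.ball ((0 : ℝ), (1 : ℝ)) ε := by
      by_contra hcon
      exact hne ⟨θ, hθ, hcon⟩
    have := hball (Metric.mem_ball.mp hmem)
    calc g θ ≤ ‖g θ‖ := le_abs_self _
    _ ≤ c * ‖h θ‖ := this
    _ = c * h θ := by rw [Real.norm_eq_abs, abs_of_nonneg (hhnn θ)]

/-- if `D(f_{0,1}‖f_{η,σ})` is finite for all `η ∈ ℝ, σ > 0`, continuous in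
`(η,σ)`, and `O(η² + (1-σ)²)` near `(0,1)`, then on compact location and scale ranges the
KL divergence between two members of the location-scale family is bounded above by a
constant multiple of `(μ₁-μ₂)² + (σ₁-σ₂)²`. -/
theorem kl_divergence_upper_bound
    (f : ℝ → ℝ) (hf_nonneg : ∀ y, 0 ≤ f y) (hf_int : ∫ y, f y = 1)
    (hfin : ∀ η σ : ℝ, 0 < σ →
      Integrable (fun y => f y * Real.log (f y / locScale f η σ y)))
    (hcont : ContinuousOn (fun θ : ℝ × ℝ => klDiv f (locScale f θ.1 θ.2))
      {θ : ℝ × ℝ | 0 < θ.2})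
    (hO : (fun θ : ℝ × ℝ => klDiv f (locScale f θ.1 θ.2))
      =O[𝓝 ((0 : ℝ), (1 : ℝ))] (fun θ : ℝ × ℝ => θ.1 ^ 2 + (1 - θ.2) ^ 2))
    (J : ℝ) (hJ : 0 < J) (σbar : ℝ) (hσbar : 1 < σbar) :
    ∃ Cbar : ℝ, 0 < Cbar ∧
      ∀ μ₁ μ₂ σ₁ σ₂ : ℝ, μ₁ ∈ Set.Icc (-J) J → μ₂ ∈ Set.Icc (-J) J →
        σ₁ ∈ Set.Icc σbar⁻¹ σbar → σ₂ ∈ Set.Icc σbar⁻¹ σbar →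
        klDiv (locScale f μ₁ σ₁) (locScale f μ₂ σ₂) ≤
          Cbar * ((μ₁ - μ₂) ^ 2 + (σ₁ - σ₂) ^ 2) := by
  have hσbar0 : 0 < σbar := lt_trans one_pos hσbar
  obtain ⟨C, hC, hbound⟩ := bigO_compact_bound _ hcont hO (2 * J * σbar)
    ((σbar ^ 2)⁻¹) (σbar ^ 2) (by positivity)
  refine ⟨C * σbar ^ 2, by positivity, ?_⟩
  rintro μ₁ μ₂ σ₁ σ₂ ⟨hμ₁l, hμ₁u⟩ ⟨hμ₂l, hμ₂u⟩ ⟨hσ₁l, hσ₁u⟩ ⟨hσ₂l, hσ₂u⟩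
  have hσbinv : 0 < σbar⁻¹ := by positivity
  have hσ₁0 : 0 < σ₁ := lt_of_lt_of_le hσbinv hσ₁l
  have hσ₂0 : 0 < σ₂ := lt_of_lt_of_le hσbinv hσ₂l
  have hσ₁inv : σ₁⁻¹ ≤ σbar := by
    rw [inv_le_comm₀ hσ₁0 hσbar0]
    exact hσ₁l
  have hσ₁inv0 : 0 < σ₁⁻¹ := by positivity
  rw [klDiv_locScale_aux f μ₁ μ₂ σ₁ σ₂ hσ₁0 hσ₂0]
  set η := (μ₂ - μ₁) / σ₁ with hη
  set σ := σ₂ / σ₁ with hσ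
  have hmem : (η, σ) ∈ Set.Icc (-(2 * J * σbar)) (2 * J * σbar) ×ˢ
      Set.Icc ((σbar ^ 2)⁻¹) (σbar ^ 2) := by
    constructor
    · constructor
      · rw [hη, div_eq_mul_inv]
        nlinarith
      · rw [hη, div_eq_mul_inv]
        nlinarith
    · constructor
      · rw [hσ]
        rw [div_eq_mul_inv, show (σbar ^ 2)⁻¹ = σbar⁻¹ * σbar⁻¹ by rw [sq, mul_inv]]
        have h1 : σbar⁻¹ ≤ σ₁⁻¹ := by
          rw [inv_le_inv₀ hσbar0 hσ₁0]
          exact hσ₁u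
        nlinarith
      · rw [hσ, div_eq_mul_inv, sq]
        nlinarith
  have hmain := hbound (η, σ) hmem
  have h3 : 1 ≤ σbar * σ₁ := by
    rw [← mul_inv_cancel₀ hσbar0.ne']
    exact mul_le_mul_of_nonneg_left hσ₁l hσbar0.le
  have h4 : 1 ≤ (σbar * σ₁) ^ 2 := by nlinarith
  have hhle : η ^ 2 + (1 - σ) ^ 2 ≤ σbar ^ 2 * ((μ₁ - μ₂) ^ 2 + (σ₁ - σ₂) ^ 2) := by
    have h1 : η ^ 2 ≤ σbar ^ 2 * (μ₁ - μ₂) ^ 2 := by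
      rw [hη, div_pow]
      rw [div_le_iff₀ (by positivity)]
      nlinarith [sq_nonneg (μ₁ - μ₂), h4]
    have h2 : (1 - σ) ^ 2 ≤ σbar ^ 2 * (σ₁ - σ₂) ^ 2 := by
      have heq : 1 - σ = (σ₁ - σ₂) / σ₁ := by
        rw [hσ]; field_simp
      rw [heq, div_pow, div_le_iff₀ (by positivity)]
      nlinarith [sq_nonneg (σ₁ - σ₂), h4]
    linarith
  calc klDiv f (locScale f η σ) ≤ C * (η ^ 2 + (1 - σ) ^ 2) := hmain
  _ ≤ C * (σbar ^ 2 * ((μ₁ - μ₂) ^ 2 + (σ₁ - σ₂) ^ 2)) :=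
      mul_le_mul_of_nonneg_left hhle hC.le
  _ = C * σbar ^ 2 * ((μ₁ - μ₂) ^ 2 + (σ₁ - σ₂) ^ 2) := by ring
end

section
/- Let f_{η,σ}(y) = (τ(1−τ)/σ) exp[−ρ_τ((y−η)/σ)] be the asymmetric Laplace density with location η ∈ ℝ, scale σ > 0, and fixed skewness 0 < τ < 1. Then the Kullback–Leibler divergence D(f_{0,1} ‖ f_{η,σ}) is finite and twice continuously differentiable in (η,σ) in a neighborhood of (0,1); in particular D(f_{0,1} ‖ f_{η,σ}) = O(η² + (σ−1)²) as (η,σ) → (0,1). -/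
open MeasureTheory Filter Asymptotics Topology Set

/-- The check loss `ρ_τ(y) = y(τ - 1{y<0})`. -/
noncomputable def checkLoss (τ y : ℝ) : ℝ := y * (τ - if y < 0 then 1 else 0)

/-- The asymmetric Laplace density with location `η`, scale `σ` and skewness `τ`:
`f_{η,σ}(y) = (τ(1-τ)/σ) exp[-ρ_τ((y-η)/σ)]`. -/
noncomputable def ald (τ η σ : ℝ) : ℝ → ℝ := fun y =>
  τ * (1 - τ) / σ * Real.exp (-(checkLoss τ ((y - η) / σ)))

lemma checkLoss_of_nonneg {τ y : ℝ} (h : 0 ≤ y) : checkLoss τ y = y * τ := by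
  simp [checkLoss, not_lt.mpr h]

lemma checkLoss_of_neg {τ y : ℝ} (h : y < 0) : checkLoss τ y = y * (τ - 1) := by
  simp [checkLoss, h]

lemma checkLoss_neg_arg (τ y : ℝ) : checkLoss τ (-y) = checkLoss (1 - τ) y := by
  rcases lt_trichotomy y 0 with h | h | h
  · rw [checkLoss_of_nonneg (by linarith), checkLoss_of_neg h]; ring
  · simp [h, checkLoss]
  · rw [checkLoss_of_neg (by linarith), checkLoss_of_nonneg h.le]; ring

lemma checkLoss_div {τ x σ : ℝ} (hσ : 0 < σ) : checkLoss τ (x / σ) = checkLoss τ x / σ := by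
  have h : x / σ < 0 ↔ x < 0 := by
    constructor
    · intro h; by_contra h'; push_neg at h'; nlinarith [div_nonneg h' hσ.le]
    · intro h; exact div_neg_of_neg_of_pos h hσ
  unfold checkLoss
  simp only [h]; ring

lemma ald01 (τ : ℝ) (y : ℝ) : ald τ 0 1 y = τ * (1 - τ) * Real.exp (-(checkLoss τ y)) := by
  simp [ald]

lemma ald_pos {τ σ : ℝ} (hτ0 : 0 < τ) (hτ1 : τ < 1) (hσ : 0 < σ) (η y : ℝ) :
    0 < ald τ η σ y := by
  have h : 0 < τ * (1 - τ) / σ := div_pos (mul_pos hτ0 (by linarith)) hσ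
  exact mul_pos h (Real.exp_pos _)

lemma ald_neg_symm (τ y : ℝ) : ald τ 0 1 (-y) = ald (1 - τ) 0 1 y := by
  simp only [ald, sub_zero, div_one, checkLoss_neg_arg]
  ring_nf

lemma aux_tendsto_zero {b : ℝ} (hb : 0 < b) (C D : ℝ) :
    Tendsto (fun y : ℝ => (C * y + D) * Real.exp (-(b * y))) atTop (𝓝 0) := by
  have hby : Tendsto (fun y : ℝ => b * y) atTop atTop :=
    Tendsto.const_mul_atTop hb tendsto_id
  have h0 : Tendsto (fun y : ℝ => Real.exp (-(b * y))) atTop (𝓝 0) := by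
    have := Real.tendsto_exp_atBot.comp (tendsto_neg_atTop_atBot.comp hby)
    simpa [Function.comp_def] using this
  have h1 : Tendsto (fun y : ℝ => (b * y) * Real.exp (-(b * y))) atTop (𝓝 0) := by
    have := (Real.tendsto_pow_mul_exp_neg_atTop_nhds_zero 1).comp hby
    simpa [Function.comp_def] using this
  have := ((h1.const_mul (C / b)).add (h0.const_mul D))
  have heq : (fun y : ℝ => C / b * ((b * y) * Real.exp (-(b * y))) + D * Real.exp (-(b * y)))
      = fun y : ℝ => (C * y + D) * Real.exp (-(b * y)) := by
    funext y
    field_simp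
  rw [heq] at this
  simpa using this

lemma aux_int_Ioi {b : ℝ} (hb : 0 < b) {a B A : ℝ} (h : ∀ x ∈ Ioi a, 0 ≤ B * x + A) :
    IntegrableOn (fun y => (B * y + A) * Real.exp (-(b * y))) (Ioi a) volume ∧
    ∫ y in Ioi a, (B * y + A) * Real.exp (-(b * y))
      = ((B * a + A) / b + B / b ^ 2) * Real.exp (-(b * a)) := by
  have hb' : b ≠ 0 := ne_of_gt hb
  set g : ℝ → ℝ := fun y => -(((B * y + A) / b + B / b ^ 2) * Real.exp (-(b * y))) with hg
  have hderiv : ∀ x ∈ Ici a, HasDerivAt g ((B * x + A) * Real.exp (-(b * x))) x := by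
    intro x _
    have h1 : HasDerivAt (fun y : ℝ => (B * y + A) / b + B / b ^ 2) (B / b) x := by
      simpa using ((((hasDerivAt_id x).const_mul B).add_const A).div_const b).add_const (B / b ^ 2)
    have h2 : HasDerivAt (fun y : ℝ => Real.exp (-(b * y))) (Real.exp (-(b * x)) * (-b)) x := by
      have hx : HasDerivAt (fun y : ℝ => -(b * y)) (-b) x := by
        simpa using ((hasDerivAt_id x).const_mul b).fun_neg
      exact hx.exp
    have := (h1.fun_mul h2).fun_neg
    convert this using 1
    · rfl
    · rfl
    field_simp
    ring
  have hnonneg : ∀ x ∈ Ioi a, 0 ≤ (B * x + A) * Real.exp (-(b * x)) := fun x hx =>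
    mul_nonneg (h x hx) (Real.exp_pos _).le
  have htend : Tendsto g atTop (𝓝 0) := by
    have := (aux_tendsto_zero hb (B / b) (A / b + B / b ^ 2)).neg
    have heq : (fun y : ℝ => -((B / b * y + (A / b + B / b ^ 2)) * Real.exp (-(b * y)))) = g := by
      funext y; simp only [hg]; ring_nf
    rw [heq] at this
    simpa using this
  refine ⟨integrableOn_Ioi_deriv_of_nonneg' hderiv hnonneg htend, ?_⟩
  rw [integral_Ioi_of_hasDerivAt_of_nonneg' hderiv hnonneg htend]
  simp only [hg]
  ring

lemma aux_int_Iic {b : ℝ} (hb : 0 < b) {c B A : ℝ} (h : ∀ x ∈ Iic c, 0 ≤ B * x + A) :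
    IntegrableOn (fun y => (B * y + A) * Real.exp (b * y)) (Iic c) volume ∧
    ∫ y in Iic c, (B * y + A) * Real.exp (b * y)
      = ((B * c + A) / b - B / b ^ 2) * Real.exp (b * c) := by
  have h' : ∀ x ∈ Ioi (-c), 0 ≤ (-B) * x + A := by
    intro x hx
    have hx' : -x ≤ c := neg_le.mpr (le_of_lt (mem_Ioi.mp hx))
    have := h (-x) hx'
    linarith
  obtain ⟨hint, hval⟩ := aux_int_Ioi hb h'
  have heq : (fun y : ℝ => (B * y + A) * Real.exp (b * y))
      = fun y : ℝ => ((-B) * (-y) + A) * Real.exp (-(b * (-y))) := by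
    funext y; ring_nf
  constructor
  · have Aemb : MeasurableEmbedding (fun x : ℝ => -x) :=
      (Homeomorph.neg ℝ).measurableEmbedding
    rw [heq, IntegrableOn, ← Measure.map_neg_eq_self (volume : Measure ℝ)]
    have hres := Aemb.restrict_map (volume : Measure ℝ) (Iic c)
    rw [hres, Aemb.integrable_map_iff]
    have : (fun x : ℝ => -x) ⁻¹' (Iic c) = Ici (-c) := by
      ext x; simp [neg_le]
    rw [this]
    have : IntegrableOn (fun y => ((-B) * y + A) * Real.exp (-(b * y))) (Ici (-c)) volume :=
      Iff.mpr integrableOn_Ici_iff_integrableOn_Ioi hint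
    apply this.congr_fun _ measurableSet_Ici
    intro x _
    simp [Function.comp]
  · rw [heq]
    rw [integral_comp_neg_Iic c (fun y => ((-B) * y + A) * Real.exp (-(b * y)))]
    rw [hval]
    ring_nf

lemma aux_cont (b B A : ℝ) : Continuous (fun y : ℝ => (B * y + A) * Real.exp (-(b * y))) := by
  fun_prop

lemma aux_int_Ioc {b : ℝ} (hb : b ≠ 0) {B A u v : ℝ} (huv : u ≤ v) :
    IntegrableOn (fun y => (B * y + A) * Real.exp (-(b * y))) (Ioc u v) volume ∧
    ∫ y in Ioc u v, (B * y + A) * Real.exp (-(b * y))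
      = (-(((B * v + A) / b + B / b ^ 2) * Real.exp (-(b * v))))
        - (-(((B * u + A) / b + B / b ^ 2) * Real.exp (-(b * u)))) := by
  constructor
  · exact (aux_cont b B A).integrableOn_Ioc
  · rw [← intervalIntegral.integral_of_le huv]
    apply intervalIntegral.integral_eq_sub_of_hasDerivAt
    · intro x _
      have h1 : HasDerivAt (fun y : ℝ => (B * y + A) / b + B / b ^ 2) (B / b) x := by
        simpa using ((((hasDerivAt_id x).const_mul B).add_const A).div_const b).add_const (B / b ^ 2)
      have h2 : HasDerivAt (fun y : ℝ => Real.exp (-(b * y))) (Real.exp (-(b * x)) * (-b)) x := by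
        have hx : HasDerivAt (fun y : ℝ => -(b * y)) (-b) x := by
          simpa using ((hasDerivAt_id x).const_mul b).fun_neg
        exact hx.exp
      have := (h1.fun_mul h2).fun_neg
      convert this using 1
      field_simp
      ring
    · exact (aux_cont b B A).intervalIntegrable _ _

lemma checkLoss_of_nonpos {τ y : ℝ} (h : y ≤ 0) : checkLoss τ y = y * (τ - 1) := by
  rcases h.lt_or_eq with h' | h'
  · exact checkLoss_of_neg h'
  · simp [h', checkLoss]

lemma aux_key_pos (τ : ℝ) (hτ0 : 0 < τ) (hτ1 : τ < 1) {η : ℝ} (hη : 0 ≤ η) :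
    Integrable (fun y => ald τ 0 1 y * checkLoss τ (y - η)) volume ∧
    ∫ y, ald τ 0 1 y * checkLoss τ (y - η)
      = (1 - τ) * Real.exp (-(τ * η)) / τ + (1 - τ) * η - (1 - 2 * τ) / τ := by
  have hb1 : 0 < 1 - τ := by linarith
  set c := τ * (1 - τ) with hc
  have hcpos : 0 < c := mul_pos hτ0 hb1
  set F : ℝ → ℝ := fun y => ald τ 0 1 y * checkLoss τ (y - η) with hF
  -- region 1 : Iic 0
  have e1 : EqOn (fun y : ℝ => (-(c * (1 - τ)) * y + c * (1 - τ) * η) * Real.exp ((1 - τ) * y))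
      F (Iic 0) := by
    intro y hy
    have hy0 : y ≤ 0 := hy
    simp only [hF, ald01, checkLoss_of_nonpos hy0,
      checkLoss_of_nonpos (show y - η ≤ 0 by linarith)]
    rw [show -(y * (τ - 1)) = (1 - τ) * y by ring]
    ring
  have e2 : EqOn (fun y : ℝ => (-(c * (1 - τ)) * y + c * (1 - τ) * η) * Real.exp (-(τ * y)))
      F (Ioc 0 η) := by
    intro y hy
    simp only [hF, ald01, checkLoss_of_nonneg (le_of_lt hy.1),
      checkLoss_of_nonpos (show y - η ≤ 0 by linarith [hy.2])]
    rw [show -(y * τ) = -(τ * y) by ring]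
    ring
  have e3 : EqOn (fun y : ℝ => ((c * τ) * y + (-(c * τ * η))) * Real.exp (-(τ * y)))
      F (Ioi η) := by
    intro y hy
    have hy0 : (0:ℝ) ≤ y := le_trans hη (le_of_lt hy)
    simp only [hF, ald01, checkLoss_of_nonneg hy0,
      checkLoss_of_nonneg (show (0:ℝ) ≤ y - η by simp [mem_Ioi] at hy; linarith)]
    rw [show -(y * τ) = -(τ * y) by ring]
    ring
  obtain ⟨i1, v1⟩ := aux_int_Iic hb1 (c := 0) (B := -(c * (1 - τ))) (A := c * (1 - τ) * η)
    (by intro x hx; have hx0 : x ≤ 0 := hx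
        nlinarith [mul_nonneg (mul_pos hcpos hb1).le hη,
          mul_nonneg (mul_pos hcpos hb1).le (neg_nonneg.mpr hx0)])
  obtain ⟨i2, v2⟩ := aux_int_Ioc (ne_of_gt hτ0) (B := -(c * (1 - τ))) (A := c * (1 - τ) * η) hη
  obtain ⟨i3, v3⟩ := aux_int_Ioi hτ0 (a := η) (B := c * τ) (A := -(c * τ * η))
    (by intro x hx; have hx0 : η < x := hx
        nlinarith [mul_nonneg (mul_pos hcpos hτ0).le (show (0:ℝ) ≤ x - η by linarith)])
  have hF1 : IntegrableOn F (Iic 0) volume := i1.congr_fun e1 measurableSet_Iic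
  have hF2 : IntegrableOn F (Ioc 0 η) volume := i2.congr_fun e2 measurableSet_Ioc
  have hF3 : IntegrableOn F (Ioi η) volume := i3.congr_fun e3 measurableSet_Ioi
  have hFIoi : IntegrableOn F (Ioi 0) volume := by
    have := hF2.union hF3
    rwa [Ioc_union_Ioi_eq_Ioi hη] at this
  have hFint : Integrable F volume := by
    have := hF1.union hFIoi
    rw [Iic_union_Ioi] at this
    exact integrableOn_univ.mp this
  refine ⟨hFint, ?_⟩
  have hsplit : ∫ y, F y = (∫ y in Iic 0, F y) + ((∫ y in Ioc 0 η, F y) + ∫ y in Ioi η, F y) := by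
    rw [← setIntegral_union Ioc_disjoint_Ioi_same measurableSet_Ioi hF2 hF3,
      Ioc_union_Ioi_eq_Ioi hη,
      ← setIntegral_union (Iic_disjoint_Ioi le_rfl) measurableSet_Ioi hF1 hFIoi,
      Iic_union_Ioi, Measure.restrict_univ]
  rw [hsplit, ← setIntegral_congr_fun measurableSet_Iic e1,
    ← setIntegral_congr_fun measurableSet_Ioc e2,
    ← setIntegral_congr_fun measurableSet_Ioi e3, v1, v2, v3]
  rw [show (1 - τ) * (0:ℝ) = 0 by ring, show -(τ * (0:ℝ)) = 0 by ring, Real.exp_zero]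
  have hτ : τ ≠ 0 := ne_of_gt hτ0
  have hτ1' : (1:ℝ) - τ ≠ 0 := ne_of_gt hb1
  field_simp
  ring

noncomputable def auxH (τ η : ℝ) : ℝ :=
  if 0 ≤ η then (1 - τ) * Real.exp (-(τ * η)) / τ + (1 - τ) * η - (1 - 2 * τ) / τ
  else τ * Real.exp ((1 - τ) * η) / (1 - τ) - τ * η + (1 - 2 * τ) / (1 - τ)

lemma aux_integrable_neg {f : ℝ → ℝ} (h : Integrable f volume) :
    Integrable (fun y => f (-y)) volume := by
  have A : MeasurableEmbedding (fun x : ℝ => -x) := (Homeomorph.neg ℝ).measurableEmbedding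
  have : Integrable f (Measure.map (fun x : ℝ => -x) volume) := by
    rwa [Measure.map_neg_eq_self]
  exact A.integrable_map_iff.mp this

lemma aux_key (τ : ℝ) (hτ0 : 0 < τ) (hτ1 : τ < 1) (η : ℝ) :
    Integrable (fun y => ald τ 0 1 y * checkLoss τ (y - η)) volume ∧
    ∫ y, ald τ 0 1 y * checkLoss τ (y - η) = auxH τ η := by
  by_cases hη : 0 ≤ η
  · obtain ⟨h1, h2⟩ := aux_key_pos τ hτ0 hτ1 hη
    exact ⟨h1, by rw [h2, auxH, if_pos hη]⟩
  · push_neg at hη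
    have hη' : 0 ≤ -η := by linarith
    obtain ⟨h1, h2⟩ := aux_key_pos (1 - τ) (by linarith) (by linarith) hη'
    have hcomp : (fun y => ald τ 0 1 y * checkLoss τ (y - η))
        = fun y => ald (1 - τ) 0 1 (-y) * checkLoss (1 - τ) (-y - -η) := by
      funext y
      rw [show -y - -η = -(y - η) by ring, checkLoss_neg_arg,
        show (1 : ℝ) - (1 - τ) = τ by ring, ← ald_neg_symm, neg_neg]
    have hneg := integral_neg_eq_self
      (fun z => ald (1 - τ) 0 1 z * checkLoss (1 - τ) (z - -η)) (volume : Measure ℝ)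
    constructor
    · rw [hcomp]
      exact aux_integrable_neg h1
    · rw [hcomp, hneg, h2, auxH, if_neg (not_le.mpr hη)]
      rw [show (1 : ℝ) - (1 - τ) = τ by ring]
      ring_nf

lemma aux_f0 (τ : ℝ) (hτ0 : 0 < τ) (hτ1 : τ < 1) :
    Integrable (ald τ 0 1) volume ∧ ∫ y, ald τ 0 1 y = 1 := by
  have hb1 : 0 < 1 - τ := by linarith
  set c := τ * (1 - τ) with hc
  have hcpos : 0 < c := mul_pos hτ0 hb1
  have e1 : EqOn (fun y : ℝ => ((0:ℝ) * y + c) * Real.exp ((1 - τ) * y)) (ald τ 0 1) (Iic 0) := by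
    intro y hy
    simp only [ald01, checkLoss_of_nonpos (show y ≤ (0:ℝ) from hy)]
    rw [show -(y * (τ - 1)) = (1 - τ) * y by ring]
    ring
  have e2 : EqOn (fun y : ℝ => ((0:ℝ) * y + c) * Real.exp (-(τ * y))) (ald τ 0 1) (Ioi 0) := by
    intro y hy
    simp only [ald01, checkLoss_of_nonneg (le_of_lt (show (0:ℝ) < y from hy))]
    rw [show -(y * τ) = -(τ * y) by ring]
    ring
  obtain ⟨i1, v1⟩ := aux_int_Iic hb1 (c := 0) (B := 0) (A := c)
    (by intro x _; simpa using hcpos.le)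
  obtain ⟨i2, v2⟩ := aux_int_Ioi hτ0 (a := 0) (B := 0) (A := c)
    (by intro x _; simpa using hcpos.le)
  have hF1 : IntegrableOn (ald τ 0 1) (Iic 0) volume := i1.congr_fun e1 measurableSet_Iic
  have hF2 : IntegrableOn (ald τ 0 1) (Ioi 0) volume := i2.congr_fun e2 measurableSet_Ioi
  have hint : Integrable (ald τ 0 1) volume := by
    have := hF1.union hF2
    rw [Iic_union_Ioi] at this
    exact integrableOn_univ.mp this
  refine ⟨hint, ?_⟩
  have hsplit : ∫ y, ald τ 0 1 y = (∫ y in Iic 0, ald τ 0 1 y) + ∫ y in Ioi 0, ald τ 0 1 y := by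
    rw [← setIntegral_union (Iic_disjoint_Ioi le_rfl) measurableSet_Ioi hF1 hF2,
      Iic_union_Ioi, Measure.restrict_univ]
  rw [hsplit, ← setIntegral_congr_fun measurableSet_Iic e1,
    ← setIntegral_congr_fun measurableSet_Ioi e2, v1, v2]
  rw [show (1 - τ) * (0:ℝ) = 0 by ring, show -(τ * (0:ℝ)) = 0 by ring, Real.exp_zero]
  have hτ : τ ≠ 0 := ne_of_gt hτ0
  have hτ1' : (1:ℝ) - τ ≠ 0 := ne_of_gt hb1
  field_simp
  ring

lemma aux_integrand_eq (τ : ℝ) (hτ0 : 0 < τ) (hτ1 : τ < 1) {σ : ℝ} (hσ : 0 < σ) (η y : ℝ) :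
    ald τ 0 1 y * Real.log (ald τ 0 1 y / ald τ η σ y)
      = Real.log σ * ald τ 0 1 y
        + (1 / σ) * (ald τ 0 1 y * checkLoss τ (y - η))
        - ald τ 0 1 y * checkLoss τ y := by
  have hb1 : 0 < 1 - τ := by linarith
  have hcpos : 0 < τ * (1 - τ) := mul_pos hτ0 hb1
  have h0 : 0 < ald τ 0 1 y := ald_pos hτ0 hτ1 one_pos 0 y
  have h1 : 0 < ald τ η σ y := ald_pos hτ0 hτ1 hσ η y
  rw [Real.log_div (ne_of_gt h0) (ne_of_gt h1)]
  have l0 : Real.log (ald τ 0 1 y) = Real.log (τ * (1 - τ)) - checkLoss τ y := by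
    rw [ald01, Real.log_mul (ne_of_gt hcpos) (ne_of_gt (Real.exp_pos _)), Real.log_exp]
    ring
  have l1 : Real.log (ald τ η σ y)
      = Real.log (τ * (1 - τ)) - Real.log σ - checkLoss τ (y - η) / σ := by
    unfold ald
    rw [Real.log_mul (by positivity) (ne_of_gt (Real.exp_pos _)), Real.log_exp,
      Real.log_div (ne_of_gt hcpos) (ne_of_gt hσ), checkLoss_div hσ]
    ring
  rw [l0, l1]
  field_simp
  ring

lemma aux_kl_eq (τ : ℝ) (hτ0 : 0 < τ) (hτ1 : τ < 1) (η : ℝ) {σ : ℝ} (hσ : 0 < σ) :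
    klDiv (ald τ 0 1) (ald τ η σ) = Real.log σ + auxH τ η / σ - 1 := by
  obtain ⟨if0, vf0⟩ := aux_f0 τ hτ0 hτ1
  obtain ⟨ikη, vkη⟩ := aux_key τ hτ0 hτ1 η
  obtain ⟨ik0, vk0⟩ := aux_key τ hτ0 hτ1 0
  simp only [sub_zero] at ik0 vk0
  have hfun : (fun y => ald τ 0 1 y * Real.log (ald τ 0 1 y / ald τ η σ y))
      = fun y => Real.log σ * ald τ 0 1 y
          + (1 / σ) * (ald τ 0 1 y * checkLoss τ (y - η))
          - ald τ 0 1 y * checkLoss τ y := by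
    funext y
    exact aux_integrand_eq τ hτ0 hτ1 hσ η y
  have hadd : Integrable (fun y => Real.log σ * ald τ 0 1 y
      + 1 / σ * (ald τ 0 1 y * checkLoss τ (y - η))) volume :=
    (if0.const_mul (Real.log σ)).add (ikη.const_mul (1/σ))
  rw [klDiv, hfun, integral_sub hadd ik0,
    integral_add (if0.const_mul (Real.log σ)) (ikη.const_mul (1/σ)),
    integral_const_mul, integral_const_mul, vf0, vkη, vk0]
  have : auxH τ 0 = 1 := by
    rw [auxH, if_pos le_rfl]
    have hτ : τ ≠ 0 := ne_of_gt hτ0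
    simp only [mul_zero, neg_zero, Real.exp_zero]
    field_simp
    ring
  rw [this]
  ring

lemma aux_glue {f g k : ℝ → ℝ} {L x : ℝ} (hg : HasDerivAt g L x) (hk : HasDerivAt k L x)
    (h1 : ∀ y, x ≤ y → f y = g y) (h2 : ∀ y, y ≤ x → f y = k y) : HasDerivAt f L x := by
  rw [hasDerivAt_iff_tendsto_slope] at hg hk ⊢
  rw [← nhdsLT_sup_nhdsGT x, tendsto_sup]
  constructor
  · apply Tendsto.congr' _ (hk.mono_left (nhdsWithin_mono x fun y hy => ne_of_lt hy))
    filter_upwards [self_mem_nhdsWithin] with y hy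
    have hy' : y ≤ x := le_of_lt hy
    simp only [slope_def_field, h2 y hy', h2 x le_rfl]
  · apply Tendsto.congr' _ (hg.mono_left (nhdsWithin_mono x fun y hy => ne_of_gt hy))
    filter_upwards [self_mem_nhdsWithin] with y hy
    have hy' : x ≤ y := le_of_lt hy
    simp only [slope_def_field, h1 y hy', h1 x le_rfl]

noncomputable def auxH1 (τ η : ℝ) : ℝ :=
  if 0 ≤ η then (1 - τ) - (1 - τ) * Real.exp (-(τ * η))
  else τ * Real.exp ((1 - τ) * η) - τ

noncomputable def auxH2 (τ η : ℝ) : ℝ :=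
  if 0 ≤ η then τ * (1 - τ) * Real.exp (-(τ * η))
  else τ * (1 - τ) * Real.exp ((1 - τ) * η)

lemma aux_exp_lin (a x : ℝ) : HasDerivAt (fun y : ℝ => Real.exp (a * y)) (a * Real.exp (a * x)) x := by
  have := (((hasDerivAt_id x).const_mul a)).exp
  simpa [mul_comm] using this

lemma auxR_hasDeriv {τ : ℝ} (hτ : τ ≠ 0) (z : ℝ) :
    HasDerivAt (fun η : ℝ => (1 - τ) * Real.exp (-(τ * η)) / τ + (1 - τ) * η - (1 - 2 * τ) / τ)
      ((1 - τ) - (1 - τ) * Real.exp (-(τ * z))) z := by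
  have h1 : HasDerivAt (fun η : ℝ => Real.exp (-τ * η)) (-τ * Real.exp (-τ * z)) z :=
    aux_exp_lin (-τ) z
  have h3 := (((h1.const_mul (1 - τ)).div_const τ).add
    ((hasDerivAt_id z).const_mul (1 - τ))).sub_const ((1 - 2 * τ) / τ)
  convert h3 using 1
  · rfl
  · rfl
  · funext y
    rw [show -(τ * y) = -τ * y by ring]
    simp [id]
  · rw [show -(τ * z) = -τ * z by ring]
    field_simp
    ring

lemma auxL_hasDeriv {τ : ℝ} (hτ : (1:ℝ) - τ ≠ 0) (z : ℝ) :
    HasDerivAt (fun η : ℝ => τ * Real.exp ((1 - τ) * η) / (1 - τ) - τ * η + (1 - 2 * τ) / (1 - τ))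
      (τ * Real.exp ((1 - τ) * z) - τ) z := by
  have h1 : HasDerivAt (fun η : ℝ => Real.exp ((1 - τ) * η)) ((1 - τ) * Real.exp ((1 - τ) * z)) z :=
    aux_exp_lin (1 - τ) z
  have h3 := (((h1.const_mul τ).div_const (1 - τ)).fun_sub
    ((hasDerivAt_id' z).const_mul τ)).add_const ((1 - 2 * τ) / (1 - τ))
  convert h3 using 1
  · rfl
  · rfl
  field_simp

lemma auxH_hasDeriv (τ : ℝ) (hτ0 : 0 < τ) (hτ1 : τ < 1) (x : ℝ) :
    HasDerivAt (auxH τ) (auxH1 τ x) x := by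
  have hτ : τ ≠ 0 := ne_of_gt hτ0
  have hτ' : (1:ℝ) - τ ≠ 0 := ne_of_gt (by linarith)
  rcases lt_trichotomy x 0 with h | h | h
  · have hev : auxH τ =ᶠ[𝓝 x] fun η : ℝ =>
        τ * Real.exp ((1 - τ) * η) / (1 - τ) - τ * η + (1 - 2 * τ) / (1 - τ) := by
      filter_upwards [Iio_mem_nhds h] with y hy
      rw [auxH, if_neg (not_le.mpr hy)]
    rw [auxH1, if_neg (not_le.mpr h)]
    exact (auxL_hasDeriv hτ' x).congr_of_eventuallyEq hev
  · subst h
    rw [auxH1, if_pos le_rfl]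
    rw [show (1 - τ) - (1 - τ) * Real.exp (-(τ * 0)) = 0 by simp]
    have hR0 : HasDerivAt (fun η : ℝ =>
        (1 - τ) * Real.exp (-(τ * η)) / τ + (1 - τ) * η - (1 - 2 * τ) / τ) 0 0 := by
      have := auxR_hasDeriv hτ 0
      simpa using this
    have hL0 : HasDerivAt (fun η : ℝ =>
        τ * Real.exp ((1 - τ) * η) / (1 - τ) - τ * η + (1 - 2 * τ) / (1 - τ)) 0 0 := by
      have := auxL_hasDeriv hτ' 0
      simpa using this
    apply aux_glue hR0 hL0
    · intro y hy
      rw [auxH, if_pos hy]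
    · intro y hy
      rcases hy.lt_or_eq with h' | h'
      · rw [auxH, if_neg (not_le.mpr h')]
      · subst h'
        rw [auxH, if_pos le_rfl]
        simp only [mul_zero, neg_zero, Real.exp_zero]
        field_simp
        ring
  · have hev : auxH τ =ᶠ[𝓝 x] fun η : ℝ =>
        (1 - τ) * Real.exp (-(τ * η)) / τ + (1 - τ) * η - (1 - 2 * τ) / τ := by
      filter_upwards [Ioi_mem_nhds h] with y hy
      rw [auxH, if_pos (le_of_lt hy)]
    rw [auxH1, if_pos (le_of_lt h)]
    exact (auxR_hasDeriv hτ x).congr_of_eventuallyEq hev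

lemma auxH1_hasDeriv (τ : ℝ) (hτ0 : 0 < τ) (hτ1 : τ < 1) (x : ℝ) :
    HasDerivAt (auxH1 τ) (auxH2 τ x) x := by
  have hτ : τ ≠ 0 := ne_of_gt hτ0
  have hR : ∀ z : ℝ, HasDerivAt (fun η : ℝ => (1 - τ) - (1 - τ) * Real.exp (-(τ * η)))
      (τ * (1 - τ) * Real.exp (-(τ * z))) z := by
    intro z
    have h1 : HasDerivAt (fun η : ℝ => Real.exp (-τ * η)) (-τ * Real.exp (-τ * z)) z :=
      aux_exp_lin (-τ) z
    have h2 := (h1.const_mul (1 - τ)).const_sub (1 - τ)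
    convert h2 using 1
    · rfl
    · rfl
    · funext y
      rw [show -(τ * y) = -τ * y by ring]
    · rw [show -(τ * z) = -τ * z by ring]
      ring
  have hL : ∀ z : ℝ, HasDerivAt (fun η : ℝ => τ * Real.exp ((1 - τ) * η) - τ)
      (τ * (1 - τ) * Real.exp ((1 - τ) * z)) z := by
    intro z
    have h1 : HasDerivAt (fun η : ℝ => Real.exp ((1 - τ) * η))
        ((1 - τ) * Real.exp ((1 - τ) * z)) z := aux_exp_lin (1 - τ) z
    have h2 := (h1.const_mul τ).sub_const τ
    convert h2 using 1
    · rfl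
    · rfl
    ring
  rcases lt_trichotomy x 0 with h | h | h
  · have hev : auxH1 τ =ᶠ[𝓝 x] fun η : ℝ => τ * Real.exp ((1 - τ) * η) - τ := by
      filter_upwards [Iio_mem_nhds h] with y hy
      rw [auxH1, if_neg (not_le.mpr hy)]
    rw [auxH2, if_neg (not_le.mpr h)]
    exact (hL x).congr_of_eventuallyEq hev
  · subst h
    rw [auxH2, if_pos le_rfl]
    have hR0 := hR 0
    have hL0 := hL 0
    rw [show -(τ * (0:ℝ)) = 0 by ring] at hR0 ⊢
    rw [show ((1:ℝ) - τ) * 0 = 0 by ring] at hL0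
    apply aux_glue hR0 hL0
    · intro y hy
      rw [auxH1, if_pos hy]
    · intro y hy
      rcases hy.lt_or_eq with h' | h'
      · rw [auxH1, if_neg (not_le.mpr h')]
      · subst h'
        rw [auxH1, if_pos le_rfl]
        simp
  · have hev : auxH1 τ =ᶠ[𝓝 x] fun η : ℝ => (1 - τ) - (1 - τ) * Real.exp (-(τ * η)) := by
      filter_upwards [Ioi_mem_nhds h] with y hy
      rw [auxH1, if_pos (le_of_lt hy)]
    rw [auxH2, if_pos (le_of_lt h)]
    exact (hR x).congr_of_eventuallyEq hev

lemma auxH2_continuous (τ : ℝ) : Continuous (auxH2 τ) := by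
  unfold auxH2
  apply Continuous.if_le
  · fun_prop
  · fun_prop
  · exact continuous_const
  · exact continuous_id
  · intro x hx
    rw [← hx]
    norm_num

lemma auxH_contDiff (τ : ℝ) (hτ0 : 0 < τ) (hτ1 : τ < 1) : ContDiff ℝ 2 (auxH τ) := by
  have d1 := auxH_hasDeriv τ hτ0 hτ1
  have d2 := auxH1_hasDeriv τ hτ0 hτ1
  have hderiv1 : deriv (auxH τ) = auxH1 τ := funext fun x => (d1 x).deriv
  have hderiv2 : deriv (auxH1 τ) = auxH2 τ := funext fun x => (d2 x).deriv
  rw [show (2 : WithTop ℕ∞) = (1 + 1 : WithTop ℕ∞) by norm_num]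
  rw [contDiff_succ_iff_deriv]
  refine ⟨fun x => (d1 x).differentiableAt, by simp, ?_⟩
  rw [hderiv1]
  rw [show (1 : WithTop ℕ∞) = (0 + 1 : WithTop ℕ∞) by norm_num]
  rw [contDiff_succ_iff_deriv]
  refine ⟨fun x => (d2 x).differentiableAt, by simp, ?_⟩
  rw [hderiv2]
  exact contDiff_zero.mpr (auxH2_continuous τ)

lemma aux_exp_quad {x : ℝ} (hx : 0 ≤ x) : Real.exp (-x) - 1 + x ≤ x ^ 2 := by
  have hK : x + 1 ≤ Real.exp x := Real.add_one_le_exp x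
  have hKpos : 0 < Real.exp x := Real.exp_pos x
  have hq : (0:ℝ) ≤ 1 - x + x ^ 2 := by nlinarith [sq_nonneg (x - 1), sq_nonneg x]
  have h2 : 1 ≤ Real.exp x * (1 - x + x ^ 2) := by nlinarith [pow_nonneg hx 3]
  have h3 : Real.exp (-x) ≤ 1 - x + x ^ 2 := by
    rw [Real.exp_neg]
    calc (Real.exp x)⁻¹ = (Real.exp x)⁻¹ * 1 := by ring
      _ ≤ (Real.exp x)⁻¹ * (Real.exp x * (1 - x + x ^ 2)) :=
          mul_le_mul_of_nonneg_left h2 (by positivity)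
      _ = 1 - x + x ^ 2 := by field_simp
  linarith

lemma auxH_sub_one (τ : ℝ) (hτ0 : 0 < τ) (hτ1 : τ < 1) (η : ℝ) :
    0 ≤ auxH τ η - 1 ∧ auxH τ η - 1 ≤ η ^ 2 := by
  have hb1 : 0 < 1 - τ := by linarith
  have hττ : τ * (1 - τ) ≤ 1 := by nlinarith [sq_nonneg (1 - 2 * τ)]
  by_cases hη : 0 ≤ η
  · have key : auxH τ η - 1 = (1 - τ) / τ * (Real.exp (-(τ * η)) - 1 + τ * η) := by
      rw [auxH, if_pos hη]
      field_simp
      ring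
    have hx : 0 ≤ τ * η := mul_nonneg hτ0.le hη
    have hlb : 0 ≤ Real.exp (-(τ * η)) - 1 + τ * η := by
      nlinarith [Real.add_one_le_exp (-(τ * η))]
    have hub := aux_exp_quad hx
    constructor
    · rw [key]; exact mul_nonneg (by positivity) hlb
    · rw [key]
      calc (1 - τ) / τ * (Real.exp (-(τ * η)) - 1 + τ * η)
          ≤ (1 - τ) / τ * ((τ * η) ^ 2) := mul_le_mul_of_nonneg_left hub (by positivity)
        _ = τ * (1 - τ) * η ^ 2 := by field_simp
        _ ≤ η ^ 2 := by nlinarith [sq_nonneg η]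
  · push_neg at hη
    have key : auxH τ η - 1 = τ / (1 - τ) * (Real.exp ((1 - τ) * η) - 1 - (1 - τ) * η) := by
      rw [auxH, if_neg (not_le.mpr hη)]
      field_simp
      ring
    have hx : 0 ≤ -((1 - τ) * η) := by nlinarith
    have hlb : 0 ≤ Real.exp ((1 - τ) * η) - 1 - (1 - τ) * η := by
      nlinarith [Real.add_one_le_exp ((1 - τ) * η)]
    have hub : Real.exp ((1 - τ) * η) - 1 - (1 - τ) * η ≤ ((1 - τ) * η) ^ 2 := by
      have := aux_exp_quad hx
      rw [neg_neg] at this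
      nlinarith [this]
    constructor
    · rw [key]; exact mul_nonneg (by positivity) hlb
    · rw [key]
      calc τ / (1 - τ) * (Real.exp ((1 - τ) * η) - 1 - (1 - τ) * η)
          ≤ τ / (1 - τ) * (((1 - τ) * η) ^ 2) := mul_le_mul_of_nonneg_left hub (by positivity)
        _ = τ * (1 - τ) * η ^ 2 := by field_simp
        _ ≤ η ^ 2 := by nlinarith [sq_nonneg η]


/-- for the asymmetric Laplace family, `D(f_{0,1}‖f_{η,σ})` is finite and
twice continuously differentiable in `(η,σ)` on a neighborhood of `(0,1)`; in particular
`D(f_{0,1}‖f_{η,σ}) = O(η² + (σ-1)²)` as `(η,σ) → (0,1)`. -/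
theorem ald_kl_twice_differentiable
    (τ : ℝ) (hτ0 : 0 < τ) (hτ1 : τ < 1) :
    (∃ Uset ∈ 𝓝 ((0 : ℝ), (1 : ℝ)),
      (∀ θ ∈ Uset,
        Integrable (fun y => ald τ 0 1 y * Real.log (ald τ 0 1 y / ald τ θ.1 θ.2 y))) ∧
      ContDiffOn ℝ 2 (fun θ : ℝ × ℝ => klDiv (ald τ 0 1) (ald τ θ.1 θ.2)) Uset) ∧
    (fun θ : ℝ × ℝ => klDiv (ald τ 0 1) (ald τ θ.1 θ.2))
      =O[𝓝 ((0 : ℝ), (1 : ℝ))] (fun θ : ℝ × ℝ => θ.1 ^ 2 + (θ.2 - 1) ^ 2) := by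
  have hb1 : 0 < 1 - τ := by linarith
  set U : Set (ℝ × ℝ) := Prod.snd ⁻¹' (Ioi (1/2 : ℝ)) with hUdef
  have hUopen : IsOpen U := isOpen_Ioi.preimage continuous_snd
  have hUmem : U ∈ 𝓝 ((0 : ℝ), (1 : ℝ)) := hUopen.mem_nhds (by norm_num [hUdef])
  have hσpos : ∀ θ : ℝ × ℝ, θ ∈ U → (0:ℝ) < θ.2 := by
    intro θ hθ
    have : (1:ℝ)/2 < θ.2 := hθ
    linarith
  obtain ⟨if0, _⟩ := aux_f0 τ hτ0 hτ1
  obtain ⟨ik0, _⟩ := aux_key τ hτ0 hτ1 0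
  simp only [sub_zero] at ik0
  constructor
  · refine ⟨U, hUmem, ?_, ?_⟩
    · intro θ hθ
      have hσ : 0 < θ.2 := hσpos θ hθ
      have hfun : (fun y => ald τ 0 1 y * Real.log (ald τ 0 1 y / ald τ θ.1 θ.2 y))
          = fun y => Real.log θ.2 * ald τ 0 1 y
              + (1 / θ.2) * (ald τ 0 1 y * checkLoss τ (y - θ.1))
              - ald τ 0 1 y * checkLoss τ y := funext fun y => aux_integrand_eq τ hτ0 hτ1 hσ θ.1 y
      rw [hfun]
      exact ((if0.const_mul (Real.log θ.2)).add
        (((aux_key τ hτ0 hτ1 θ.1).1).const_mul (1 / θ.2))).sub ik0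
    · apply ContDiffOn.congr (f := fun θ : ℝ × ℝ => Real.log θ.2 + auxH τ θ.1 / θ.2 - 1)
      · have h1 : ContDiffOn ℝ 2 (fun θ : ℝ × ℝ => Real.log θ.2) U := by
          intro p hp
          exact ((Real.contDiffAt_log.mpr (ne_of_gt (hσpos p hp))).comp p
            contDiffAt_snd).contDiffWithinAt
        have h2 : ContDiffOn ℝ 2 (fun θ : ℝ × ℝ => auxH τ θ.1 / θ.2) U :=
          ContDiffOn.div (((auxH_contDiff τ hτ0 hτ1).comp contDiff_fst).contDiffOn)
            (contDiff_snd.contDiffOn) (fun p hp => ne_of_gt (hσpos p hp))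
        exact (h1.add h2).sub contDiffOn_const
      · intro θ hθ
        exact aux_kl_eq τ hτ0 hτ1 θ.1 (hσpos θ hθ)
  · rw [isBigO_iff]
    refine ⟨2, ?_⟩
    filter_upwards [hUmem] with θ hθ
    have hσhalf : (1:ℝ)/2 < θ.2 := hθ
    have hσ0 : (0:ℝ) < θ.2 := by linarith
    rw [aux_kl_eq τ hτ0 hτ1 θ.1 hσ0]
    obtain ⟨hl, hu⟩ := auxH_sub_one τ hτ0 hτ1 θ.1
    have hlog_le : Real.log θ.2 ≤ θ.2 - 1 := Real.log_le_sub_one_of_pos hσ0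
    have hlog_ge : -(Real.log θ.2) ≤ 1/θ.2 - 1 := by
      have := Real.log_le_sub_one_of_pos (show (0:ℝ) < 1/θ.2 by positivity)
      rw [one_div, Real.log_inv] at this
      rw [one_div]
      exact this
    have heq : Real.log θ.2 + auxH τ θ.1 / θ.2 - 1
        = (Real.log θ.2 + 1/θ.2 - 1) + (auxH τ θ.1 - 1)/θ.2 := by
      field_simp
      ring
    have hKL0 : 0 ≤ Real.log θ.2 + auxH τ θ.1 / θ.2 - 1 := by
      have h2 : 0 ≤ (auxH τ θ.1 - 1)/θ.2 := div_nonneg hl hσ0.le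
      rw [heq]
      linarith
    have h1 : Real.log θ.2 + 1/θ.2 - 1 ≤ 2*(θ.2 - 1)^2 := by
      have h1b : θ.2 - 2 + 1/θ.2 = (θ.2 - 1)^2/θ.2 := by field_simp; ring
      have h1c : (θ.2 - 1)^2/θ.2 ≤ 2*(θ.2 - 1)^2 := by
        rw [div_le_iff₀ hσ0]
        nlinarith [sq_nonneg (θ.2 - 1)]
      linarith
    have h2 : (auxH τ θ.1 - 1)/θ.2 ≤ 2 * θ.1^2 := by
      rw [div_le_iff₀ hσ0]
      nlinarith [mul_nonneg (sq_nonneg θ.1) (show (0:ℝ) ≤ θ.2 - 1/2 by linarith)]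
    rw [Real.norm_eq_abs, Real.norm_eq_abs, abs_of_nonneg hKL0,
      abs_of_nonneg (show (0:ℝ) ≤ θ.1^2 + (θ.2 - 1)^2 by positivity)]
    rw [heq]
    linarith
end

section
/- Let f_{η,σ}(y) = 1/(πσ[1 + ((y−η)/σ)²]) be the Cauchy density with location η ∈ ℝ and scale σ > 0. Then the Kullback–Leibler divergence admits the closed form D(f_{0,1} ‖ f_{η,σ}) = log[ ((1+σ)² + η²) / (4σ) ] for all η ∈ ℝ and σ > 0; consequently D(f_{0,1} ‖ f_{η,σ}) is twice differentiable in (η,σ) at (0,1) and D(f_{0,1} ‖ f_{η,σ}) = O(η² + (σ−1)²) as (η,σ) → (0,1). -/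
open MeasureTheory Filter Asymptotics Topology

/-- The Cauchy density with location `η` and scale `σ`:
`f_{η,σ}(y) = 1/(πσ[1 + ((y-η)/σ)²])`. -/
noncomputable def cauchy (η σ : ℝ) : ℝ → ℝ := fun y =>
  1 / (Real.pi * σ * (1 + ((y - η) / σ) ^ 2))

lemma int_pow34 : Integrable (fun y : ℝ => ((1:ℝ)+y^2) ^ (-(3:ℝ)/4)) := by
  have := integrable_rpow_neg_one_add_norm_sq (E := ℝ) (μ := volume) (r := 3/2) (by norm_num)
  convert this using 2 with y
  · simp [Real.norm_eq_abs, sq_abs]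
    norm_num

lemma log_bound (η σ : ℝ) (hσ : 0 < σ) (y : ℝ) :
    |Real.log ((y-η)^2+σ^2)| ≤ 2*|Real.log σ| + 4*(1+2*η^2/σ^2+2/σ^2)^((1:ℝ)/4) * ((1:ℝ)+y^2) ^ ((1:ℝ)/4) := by
  have h1 : (0:ℝ) < 1 + ((y-η)/σ)^2 := by positivity
  have hre : (y-η)^2+σ^2 = σ^2 * (1 + ((y-η)/σ)^2) := by field_simp; ring
  have hlog : Real.log ((y-η)^2+σ^2) = 2*Real.log σ + Real.log (1 + ((y-η)/σ)^2) := by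
    rw [hre, Real.log_mul (by positivity) (by positivity), sq, Real.log_mul hσ.ne' hσ.ne',
      two_mul]
  have h2 : (0:ℝ) ≤ Real.log (1 + ((y-η)/σ)^2) := Real.log_nonneg (by nlinarith [sq_nonneg ((y-η)/σ)])
  have h3 : Real.log (1 + ((y-η)/σ)^2) ≤ 4 * (1 + ((y-η)/σ)^2) ^ ((1:ℝ)/4) := by
    have := Real.log_le_rpow_div (x := 1 + ((y-η)/σ)^2) (by positivity) (ε := (1:ℝ)/4) (by norm_num)
    calc Real.log (1 + ((y-η)/σ)^2) ≤ (1 + ((y-η)/σ)^2) ^ ((1:ℝ)/4) / (1/4) := this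
    _ = 4 * (1 + ((y-η)/σ)^2) ^ ((1:ℝ)/4) := by ring
  have hs : (0:ℝ) < σ^2 := by positivity
  have h4 : 1 + ((y-η)/σ)^2 ≤ (1+2*η^2/σ^2+2/σ^2) * (1+y^2) := by
    have l : 1 + ((y-η)/σ)^2 = (σ^2+(y-η)^2)/σ^2 := by field_simp
    have r : (1+2*η^2/σ^2+2/σ^2) * (1+y^2) = ((σ^2+2*η^2+2)*(1+y^2))/σ^2 := by
      field_simp
    rw [l, r, div_le_div_iff₀ hs hs]
    have key : (σ^2+(y-η)^2) ≤ (σ^2+2*η^2+2)*(1+y^2) := by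
      nlinarith [sq_nonneg (y+η), sq_nonneg (η*y), hs, sq_nonneg y]
    exact mul_le_mul_of_nonneg_right key hs.le
  have h5 : (1 + ((y-η)/σ)^2) ^ ((1:ℝ)/4) ≤ ((1+2*η^2/σ^2+2/σ^2) * (1+y^2)) ^ ((1:ℝ)/4) :=
    Real.rpow_le_rpow (by positivity) h4 (by norm_num)
  have h6 : ((1+2*η^2/σ^2+2/σ^2) * (1+y^2)) ^ ((1:ℝ)/4)
      = (1+2*η^2/σ^2+2/σ^2)^((1:ℝ)/4) * ((1:ℝ)+y^2)^((1:ℝ)/4) :=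
    Real.mul_rpow (by positivity) (by positivity)
  rw [hlog]
  have habs := abs_add_le (2*Real.log σ) (Real.log (1 + ((y-η)/σ)^2))
  rw [abs_mul, abs_two, abs_of_nonneg h2] at habs
  nlinarith [h5, h6, h3]

lemma integrable_p_log (η σ : ℝ) (hσ : 0 < σ) :
    Integrable (fun y : ℝ => (Real.pi * (1+y^2))⁻¹ * Real.log ((y-η)^2+σ^2)) := by
  set c := 4*(1+2*η^2/σ^2+2/σ^2)^((1:ℝ)/4) with hc
  have hc0 : 0 ≤ c := by positivity
  have hbi : Integrable (fun y : ℝ =>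
      (2*|Real.log σ|/Real.pi) * (1+y^2)⁻¹ + (c/Real.pi) * ((1:ℝ)+y^2)^(-(3:ℝ)/4)) :=
    (integrable_inv_one_add_sq.const_mul _).add (int_pow34.const_mul _)
  refine hbi.mono' ?_ (Eventually.of_forall fun y => ?_)
  · exact ((measurable_const.mul ((measurable_const.add (measurable_id.pow_const 2)))).inv.mul
      (Real.measurable_log.comp (by fun_prop))).aestronglyMeasurable
  · have hy : (0:ℝ) < 1+y^2 := by positivity
    have hpi := Real.pi_pos
    have hinv : (0:ℝ) < (Real.pi * (1+y^2))⁻¹ := by positivity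
    rw [Real.norm_eq_abs, abs_mul, abs_of_pos hinv]
    have hb := log_bound η σ hσ y
    have key : ((1:ℝ)+y^2)^(-(3:ℝ)/4) = (1+y^2)⁻¹ * (1+y^2)^((1:ℝ)/4) := by
      rw [← Real.rpow_neg_one (1+y^2), ← Real.rpow_add hy]
      norm_num
    have expand : (Real.pi * (1+y^2))⁻¹ * (2*|Real.log σ| + c * ((1:ℝ)+y^2)^((1:ℝ)/4))
        = (2*|Real.log σ|/Real.pi) * (1+y^2)⁻¹ + (c/Real.pi) * ((1:ℝ)+y^2)^(-(3:ℝ)/4) := by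
      rw [key, mul_inv]
      field_simp
    calc (Real.pi * (1+y^2))⁻¹ * |Real.log ((y-η)^2+σ^2)|
        ≤ (Real.pi * (1+y^2))⁻¹ * (2*|Real.log σ| + c * ((1:ℝ)+y^2)^((1:ℝ)/4)) := by
          apply mul_le_mul_of_nonneg_left _ hinv.le
          exact hb
      _ = _ := expand

lemma logratio_top (η σ : ℝ) (hσ : 0 < σ) :
    Tendsto (fun y : ℝ => Real.log (1+y^2) - Real.log ((y-η)^2+σ^2)) atTop (𝓝 0) := by
  have t0 : Tendsto (fun y : ℝ => 1/y^2) atTop (𝓝 0) := by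
    have hsq : Tendsto (fun y : ℝ => y^2) atTop atTop := tendsto_pow_atTop two_ne_zero
    simpa [one_div, Pi.inv_def] using hsq.inv_tendsto_atTop
  have tη : Tendsto (fun y : ℝ => η/y) atTop (𝓝 0) :=
    tendsto_const_nhds.div_atTop tendsto_id
  have tσ : Tendsto (fun y : ℝ => σ/y) atTop (𝓝 0) :=
    tendsto_const_nhds.div_atTop tendsto_id
  have h1 : Tendsto (fun y : ℝ => (1/y^2 + 1)/((1-η/y)^2 + (σ/y)^2)) atTop (𝓝 1) := by
    have hnum : Tendsto (fun y : ℝ => 1/y^2 + 1) atTop (𝓝 (0+1)) := t0.add tendsto_const_nhds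
    have hden : Tendsto (fun y : ℝ => (1-η/y)^2 + (σ/y)^2) atTop (𝓝 (((1:ℝ)-0)^2+0^2)) :=
      ((tendsto_const_nhds.sub tη).pow 2).add (tσ.pow 2)
    have := hnum.div hden (by norm_num)
    norm_num at this
    exact this.congr (fun y => by simp [Pi.div_apply, one_div])
  have h2 : Tendsto (fun y : ℝ => (1+y^2)/((y-η)^2+σ^2)) atTop (𝓝 1) := by
    apply h1.congr'
    filter_upwards [eventually_ge_atTop (1:ℝ)] with y hy
    have hy0 : y ≠ 0 := by intro h; rw [h] at hy; linarith
    have hden : (y-η)^2+σ^2 ≠ 0 := by positivity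
    field_simp
  have h3 := (Real.continuousAt_log (one_ne_zero)).tendsto.comp h2
  rw [Real.log_one] at h3
  apply h3.congr
  intro y
  have h4 : (0:ℝ) < 1 + y^2 := by positivity
  have h5 : (0:ℝ) < (y-η)^2+σ^2 := by positivity
  simp only [Function.comp]
  rw [Real.log_div h4.ne' h5.ne']

lemma logratio_bot (η σ : ℝ) (hσ : 0 < σ) :
    Tendsto (fun y : ℝ => Real.log (1+y^2) - Real.log ((y-η)^2+σ^2)) atBot (𝓝 0) := by
  have := (logratio_top (-η) σ hσ).comp tendsto_neg_atBot_atTop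
  apply this.congr
  intro y
  simp only [Function.comp]
  rw [show 1+(-y)^2 = 1+y^2 from by ring, show (-y-(-η))^2+σ^2 = (y-η)^2+σ^2 from by ring]

lemma J_int (η σ : ℝ) (hσ : 0 < σ) :
    Integrable (fun y : ℝ => 2*σ/((1+y^2)*((y-η)^2+σ^2))) ∧
    ∫ y : ℝ, 2*σ/((1+y^2)*((y-η)^2+σ^2)) = Real.pi * (2*(1+σ)/((1+σ)^2+η^2)) := by
  -- integrability
  have hint : Integrable (fun y : ℝ => 2*σ/((1+y^2)*((y-η)^2+σ^2))) := by
    refine ((integrable_inv_one_add_sq).const_mul (2/σ)).mono' ?_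
      (Eventually.of_forall fun y => ?_)
    · exact (measurable_const.div (by fun_prop)).aestronglyMeasurable
    · have h4 : (0:ℝ) < 1 + y^2 := by positivity
      have h5 : (0:ℝ) < (y-η)^2+σ^2 := by positivity
      rw [Real.norm_eq_abs, abs_of_nonneg (by positivity)]
      rw [div_le_iff₀ (by positivity)]
      have : 2/σ * (1+y^2)⁻¹ * ((1+y^2)*((y-η)^2+σ^2)) = 2*((y-η)^2+σ^2)/σ := by
        field_simp
      rw [this, le_div_iff₀ hσ]
      nlinarith [sq_nonneg (y-η)]
  refine ⟨hint, ?_⟩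
  -- arctan limits
  have harcTop : Tendsto (fun y : ℝ => Real.arctan y) atTop (𝓝 (Real.pi/2)) :=
    tendsto_nhds_of_tendsto_nhdsWithin Real.tendsto_arctan_atTop
  have harcBot : Tendsto (fun y : ℝ => Real.arctan y) atBot (𝓝 (-(Real.pi/2))) :=
    tendsto_nhds_of_tendsto_nhdsWithin Real.tendsto_arctan_atBot
  have hinnerTop : Tendsto (fun y : ℝ => (y-η)/σ) atTop atTop :=
    (tendsto_atTop_add_const_right _ (-η) tendsto_id).atTop_div_const hσ
  have hinnerBot : Tendsto (fun y : ℝ => (y-η)/σ) atBot atBot :=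
    (tendsto_atBot_add_const_right _ (-η) tendsto_id).atBot_div_const hσ
  have harc2Top : Tendsto (fun y : ℝ => Real.arctan ((y-η)/σ)) atTop (𝓝 (Real.pi/2)) :=
    harcTop.comp hinnerTop
  have harc2Bot : Tendsto (fun y : ℝ => Real.arctan ((y-η)/σ)) atBot (𝓝 (-(Real.pi/2))) :=
    harcBot.comp hinnerBot
  by_cases hcase : η = 0 ∧ σ = 1
  · obtain ⟨h01, h02⟩ := hcase; subst h01; subst h02
    have hG : ∀ y : ℝ, HasDerivAt (fun y : ℝ => Real.arctan y + y/(1+y^2))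
        (2*1/((1+y^2)*((y-0)^2+1^2))) y := by
      intro y
      have h4 : (0:ℝ) < 1+y^2 := by positivity
      have hd : HasDerivAt (fun y : ℝ => y/(1+y^2)) ((1*(1+y^2) - y*(2*y))/(1+y^2)^2) y := by
        have hnum : HasDerivAt (fun y : ℝ => y) 1 y := hasDerivAt_id y
        have hden : HasDerivAt (fun y : ℝ => 1+y^2) (2*y) y := by
          simpa using (hasDerivAt_pow 2 y).const_add 1
        exact hnum.div hden h4.ne'
      have hsum := (Real.hasDerivAt_arctan y).add hd
      refine hsum.congr_deriv (Eq.symm ?_)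
      field_simp
      ring
    have hfrac_top : Tendsto (fun y : ℝ => y/(1+y^2)) atTop (𝓝 0) := by
      have h : Tendsto (fun y : ℝ => y⁻¹ + y) atTop atTop := by
        apply tendsto_atTop_mono' _ _ tendsto_id
        filter_upwards [eventually_ge_atTop (1:ℝ)] with y hy
        have : (0:ℝ) ≤ y⁻¹ := by positivity
        simp only [id_eq]
        linarith
      apply h.inv_tendsto_atTop.congr'
      filter_upwards [eventually_ge_atTop (1:ℝ)] with y hy
      have hy0 : y ≠ 0 := by intro h0; rw [h0] at hy; linarith
      simp only [Pi.inv_apply]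
      rw [show y⁻¹ + y = (1+y^2)/y from by field_simp, inv_div]
    have hfrac_bot : Tendsto (fun y : ℝ => y/(1+y^2)) atBot (𝓝 0) := by
      have h := (hfrac_top.comp tendsto_neg_atBot_atTop).neg
      rw [neg_zero] at h
      apply h.congr
      intro y
      simp only [Function.comp]
      rw [show -y/(1+(-y)^2) = -(y/(1+y^2)) from by rw [neg_sq]; ring]
      ring
    have htop : Tendsto (fun y : ℝ => Real.arctan y + y/(1+y^2)) atTop (𝓝 (Real.pi/2 + 0)) :=
      harcTop.add hfrac_top
    have hbot : Tendsto (fun y : ℝ => Real.arctan y + y/(1+y^2)) atBot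
        (𝓝 (-(Real.pi/2) + 0)) := harcBot.add hfrac_bot
    rw [integral_of_hasDerivAt_of_tendsto hG hint hbot htop]
    norm_num
  · have hF : 0 < (1-σ)^2 + η^2 := by
      rcases eq_or_ne η 0 with h|h
      · subst h
        have hs1 : σ ≠ 1 := fun hs => hcase ⟨rfl, hs⟩
        have : (1-σ) ≠ 0 := fun h0 => hs1 (by linarith [sub_eq_zero.mp h0])
        positivity
      · positivity
    have hE : 0 < (1+σ)^2 + η^2 := by positivity
    set A := 2*η/(((1+σ)^2+η^2)*((1-σ)^2+η^2)) with hA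
    set B := (η^2+σ^2-1)/(((1+σ)^2+η^2)*((1-σ)^2+η^2)) with hB
    set D := (1+η^2-σ^2)/(((1+σ)^2+η^2)*((1-σ)^2+η^2)) with hD
    have hG : ∀ y : ℝ, HasDerivAt (fun y : ℝ =>
        σ*A*(Real.log (1+y^2) - Real.log ((y-η)^2+σ^2)) + 2*σ*B*Real.arctan y
          + 2*D*Real.arctan ((y-η)/σ))
        (2*σ/((1+y^2)*((y-η)^2+σ^2))) y := by
      intro y
      have h4 : (0:ℝ) < 1+y^2 := by positivity
      have h5 : (0:ℝ) < (y-η)^2+σ^2 := by positivity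
      have h6 : (0:ℝ) < 1+((y-η)/σ)^2 := by positivity
      have hden1 : HasDerivAt (fun y : ℝ => 1+y^2) (2*y) y := by
        simpa using (hasDerivAt_pow 2 y).const_add 1
      have hlog1 : HasDerivAt (fun y : ℝ => Real.log (1+y^2)) (2*y/(1+y^2)) y :=
        hden1.log h4.ne'
      have hden2 : HasDerivAt (fun y : ℝ => (y-η)^2+σ^2) (2*(y-η)) y := by
        simpa using (((hasDerivAt_id y).sub_const η).pow 2).add_const (σ^2)
      have hlog2 : HasDerivAt (fun y : ℝ => Real.log ((y-η)^2+σ^2))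
          (2*(y-η)/((y-η)^2+σ^2)) y := hden2.log h5.ne'
      have hin : HasDerivAt (fun y : ℝ => (y-η)/σ) (1/σ) y := by
        simpa using ((hasDerivAt_id y).sub_const η).div_const σ
      have harct2 : HasDerivAt (fun y : ℝ => Real.arctan ((y-η)/σ))
          (1/(1+((y-η)/σ)^2) * (1/σ)) y := hin.arctan
      have hsum := (((hlog1.sub hlog2).const_mul (σ*A)).add
        ((Real.hasDerivAt_arctan y).const_mul (2*σ*B))).add (harct2.const_mul (2*D))
      refine hsum.congr_deriv (Eq.symm ?_)
      rw [hA, hB, hD]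
      field_simp
      ring
    have htop : Tendsto (fun y : ℝ =>
        σ*A*(Real.log (1+y^2) - Real.log ((y-η)^2+σ^2)) + 2*σ*B*Real.arctan y
          + 2*D*Real.arctan ((y-η)/σ)) atTop
        (𝓝 (σ*A*0 + 2*σ*B*(Real.pi/2) + 2*D*(Real.pi/2))) :=
      (((logratio_top η σ hσ).const_mul (σ*A)).add (harcTop.const_mul (2*σ*B))).add
        (harc2Top.const_mul (2*D))
    have hbot : Tendsto (fun y : ℝ =>
        σ*A*(Real.log (1+y^2) - Real.log ((y-η)^2+σ^2)) + 2*σ*B*Real.arctan y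
          + 2*D*Real.arctan ((y-η)/σ)) atBot
        (𝓝 (σ*A*0 + 2*σ*B*(-(Real.pi/2)) + 2*D*(-(Real.pi/2)))) :=
      (((logratio_bot η σ hσ).const_mul (σ*A)).add (harcBot.const_mul (2*σ*B))).add
        (harc2Bot.const_mul (2*D))
    rw [integral_of_hasDerivAt_of_tendsto hG hint hbot htop]
    have hstep : σ*A*0 + 2*σ*B*(Real.pi/2) + 2*D*(Real.pi/2)
        - (σ*A*0 + 2*σ*B*(-(Real.pi/2)) + 2*D*(-(Real.pi/2))) = Real.pi*(2*(σ*B+D)) := by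
      ring
    have hfrac : σ*B + D = (1+σ)/((1+σ)^2+η^2) := by
      rw [hB, hD, ← mul_div_assoc, ← add_div,
        div_eq_div_iff (mul_pos hE hF).ne' hE.ne']
      ring
    rw [hstep, hfrac]
    ring

lemma integrable_p : Integrable (fun y : ℝ => (Real.pi * (1+y^2))⁻¹) := by
  have := integrable_inv_one_add_sq.const_mul (Real.pi)⁻¹
  apply this.congr' ?_ (Eventually.of_forall fun y => ?_)
  · exact (by fun_prop : Measurable fun y : ℝ => (Real.pi * (1+y^2))⁻¹).aestronglyMeasurable
  · rw [mul_inv]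
lemma p_integral : ∫ y : ℝ, (Real.pi * (1+y^2))⁻¹ = 1 := by
  have h : ∀ y : ℝ, (Real.pi * (1+y^2))⁻¹ = (Real.pi)⁻¹ * (1+y^2)⁻¹ := fun y => mul_inv _ _
  rw [show (fun y : ℝ => (Real.pi * (1+y^2))⁻¹) = fun y : ℝ => (Real.pi)⁻¹ * (1+y^2)⁻¹
    from funext h] -- maybe not needed
  rw [integral_const_mul, integral_univ_inv_one_add_sq, inv_mul_cancel₀ Real.pi_ne_zero]

lemma I_hasDeriv (η σ₀ : ℝ) (h0 : 0 < σ₀) :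
    HasDerivAt (fun σ : ℝ => ∫ y : ℝ, (Real.pi*(1+y^2))⁻¹ * Real.log ((y-η)^2+σ^2))
      (2*(1+σ₀)/((1+σ₀)^2+η^2)) σ₀ := by
  have hπ := Real.pi_pos
  have key := hasDerivAt_integral_of_dominated_loc_of_deriv_le (μ := volume) (𝕜 := ℝ)
    (F := fun σ y => (Real.pi*(1+y^2))⁻¹ * Real.log ((y-η)^2+σ^2))
    (F' := fun σ y => (Real.pi*(1+y^2))⁻¹ * (2*σ/((y-η)^2+σ^2)))
    (x₀ := σ₀) (s := Metric.ball σ₀ (σ₀/2)) (bound := fun y => (4/(σ₀*Real.pi)) * (1+y^2)⁻¹)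
    (Metric.ball_mem_nhds _ (by positivity))
    (Eventually.of_forall fun σ =>
      (((measurable_const.mul ((measurable_const.add (measurable_id.pow_const 2)))).inv.mul
        (Real.measurable_log.comp (by fun_prop)))).aestronglyMeasurable)
    (integrable_p_log η σ₀ h0)
    (((measurable_const.mul ((measurable_const.add (measurable_id.pow_const 2)))).inv.mul
        (by fun_prop : Measurable fun y : ℝ => 2*σ₀/((y-η)^2+σ₀^2))).aestronglyMeasurable)
    (Eventually.of_forall fun y => ?_) ((integrable_inv_one_add_sq).const_mul _)
    (Eventually.of_forall fun y => ?_)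
  · have heq : (∫ y : ℝ, (Real.pi*(1+y^2))⁻¹ * (2*σ₀/((y-η)^2+σ₀^2)))
        = (Real.pi)⁻¹ * ∫ y : ℝ, 2*σ₀/((1+y^2)*((y-η)^2+σ₀^2)) := by
      rw [← integral_const_mul]
      congr 1; funext y
      have h4 : (0:ℝ) < 1+y^2 := by positivity
      have h5 : (0:ℝ) < (y-η)^2+σ₀^2 := by positivity
      rw [mul_inv]
      field_simp
    have := key.2
    rw [heq, (J_int η σ₀ h0).2] at this
    rw [show (Real.pi)⁻¹ * (Real.pi * (2*(1+σ₀)/((1+σ₀)^2+η^2))) = 2*(1+σ₀)/((1+σ₀)^2+η^2)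
      from by field_simp] at this
    exact this
  · -- bound
    intro σ hσb
    rw [Metric.mem_ball, Real.dist_eq, abs_lt] at hσb
    beta_reduce
    have hσ : σ₀/2 < σ := by linarith [hσb.1]
    have h4 : (0:ℝ) < 1+y^2 := by positivity
    have hσp : 0 < σ := lt_trans (half_pos h0) hσ
    have h5 : (0:ℝ) < (y-η)^2+σ^2 := add_pos_of_nonneg_of_pos (sq_nonneg _) (pow_pos hσp 2)
    rw [Real.norm_eq_abs, abs_of_nonneg (mul_nonneg (by positivity)
      (div_nonneg (by linarith) h5.le)), mul_inv,
      mul_comm (Real.pi)⁻¹ ((1+y^2)⁻¹), mul_assoc, mul_comm (4/(σ₀*Real.pi)) ((1+y^2)⁻¹)]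
    apply mul_le_mul_of_nonneg_left _ (by positivity)
    rw [show (4:ℝ)/(σ₀*Real.pi) = Real.pi⁻¹ * (4/σ₀) from by field_simp]
    apply mul_le_mul_of_nonneg_left _ (by positivity)
    rw [div_le_div_iff₀ h5 h0]
    nlinarith [sq_nonneg (y-η), mul_pos hσp hσp]
  · -- differentiability in σ
    intro σ hσb
    rw [Metric.mem_ball, Real.dist_eq, abs_lt] at hσb
    beta_reduce
    have hσ : 0 < σ := by linarith [hσb.1, h0]
    have h5 : (0:ℝ) < (y-η)^2+σ^2 := add_pos_of_nonneg_of_pos (sq_nonneg _) (pow_pos hσ 2)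
    have hden : HasDerivAt (fun σ : ℝ => (y-η)^2+σ^2) (2*σ) σ := by
      simpa using (hasDerivAt_pow 2 σ).const_add ((y-η)^2)
    exact (hden.log h5.ne').const_mul _

lemma log_split (η σ : ℝ) (hσ : 0 < σ) (y : ℝ) :
    Real.log ((y-η)^2+σ^2) = 2*Real.log σ + Real.log (1 + ((y-η)/σ)^2) := by
  have h1 : (0:ℝ) < 1 + ((y-η)/σ)^2 := by positivity
  have hre : (y-η)^2+σ^2 = σ^2 * (1 + ((y-η)/σ)^2) := by field_simp; ring
  rw [hre, Real.log_mul (by positivity) (by positivity), sq σ,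
    Real.log_mul hσ.ne' hσ.ne', two_mul]

lemma logE_tail (η : ℝ) :
    Tendsto (fun σ : ℝ => Real.log ((1+σ)^2+η^2) - 2*Real.log σ) atTop (𝓝 0) := by
  have t0 : Tendsto (fun σ : ℝ => 1/σ) atTop (𝓝 0) := tendsto_const_nhds.div_atTop tendsto_id
  have tη : Tendsto (fun σ : ℝ => η/σ) atTop (𝓝 0) := tendsto_const_nhds.div_atTop tendsto_id
  have h1 : Tendsto (fun σ : ℝ => (1/σ+1)^2 + (η/σ)^2) atTop (𝓝 (((0:ℝ)+1)^2+0^2)) :=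
    ((t0.add tendsto_const_nhds).pow 2).add (tη.pow 2)
  norm_num at h1
  have h2 : Tendsto (fun σ : ℝ => ((1+σ)^2+η^2)/σ^2) atTop (𝓝 1) := by
    apply h1.congr'
    filter_upwards [eventually_ge_atTop (1:ℝ)] with σ hσ
    have hσ0 : σ ≠ 0 := by intro h0; rw [h0] at hσ; linarith
    field_simp
  have h3 := (Real.continuousAt_log (one_ne_zero)).tendsto.comp h2
  rw [Real.log_one] at h3
  apply h3.congr'
  filter_upwards [eventually_gt_atTop (0:ℝ)] with σ hσ
  have h4 : (0:ℝ) < (1+σ)^2+η^2 := by positivity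
  have h5 : (0:ℝ) < σ^2 := by positivity
  simp only [Function.comp]
  rw [Real.log_div h4.ne' h5.ne', sq σ, Real.log_mul hσ.ne' hσ.ne']
  ring

lemma I_tail (η : ℝ) :
    Tendsto (fun σ : ℝ =>
      (∫ y : ℝ, (Real.pi*(1+y^2))⁻¹ * Real.log ((y-η)^2+σ^2)) - 2*Real.log σ)
      atTop (𝓝 0) := by
  have hπ := Real.pi_pos
  have heq : (fun σ : ℝ => ∫ y : ℝ, (Real.pi*(1+y^2))⁻¹ * Real.log (1+((y-η)/σ)^2))
      =ᶠ[atTop] (fun σ : ℝ =>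
        (∫ y : ℝ, (Real.pi*(1+y^2))⁻¹ * Real.log ((y-η)^2+σ^2)) - 2*Real.log σ) := by
    filter_upwards [eventually_gt_atTop (0:ℝ)] with σ hσ
    have h1 : (∫ y : ℝ, (Real.pi*(1+y^2))⁻¹ * (2*Real.log σ)) = 2*Real.log σ := by
      rw [integral_mul_const, p_integral, one_mul]
    rw [← h1, ← integral_sub (integrable_p_log η σ hσ) (integrable_p.mul_const _)]
    congr 1
    funext y
    rw [log_split η σ hσ y]
    ring
  apply Tendsto.congr' heq
  have hz : Tendsto (fun σ : ℝ => ∫ y : ℝ, (Real.pi*(1+y^2))⁻¹ * Real.log (1+((y-η)/σ)^2))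
      atTop (𝓝 (∫ _ : ℝ, (0:ℝ))) := by
    apply tendsto_integral_filter_of_dominated_convergence
      (bound := fun y : ℝ => (4*(2+2*η^2)^((1:ℝ)/4)/Real.pi) * ((1:ℝ)+y^2)^(-(3:ℝ)/4))
    · apply Eventually.of_forall
      intro σ
      exact ((measurable_const.mul ((measurable_const.add (measurable_id.pow_const 2)))).inv.mul
        (Real.measurable_log.comp (by fun_prop))).aestronglyMeasurable
    · filter_upwards [eventually_ge_atTop (1:ℝ)] with σ hσ
      apply Eventually.of_forall
      intro y
      have hy : (0:ℝ) < 1+y^2 := by positivity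
      have h1 : (0:ℝ) < 1 + ((y-η)/σ)^2 := by positivity
      have hσ0 : (0:ℝ) < σ := by linarith
      have hlog0 : (0:ℝ) ≤ Real.log (1+((y-η)/σ)^2) :=
        Real.log_nonneg (by nlinarith [sq_nonneg ((y-η)/σ)])
      rw [Real.norm_eq_abs, abs_mul, abs_of_pos (by positivity : (0:ℝ) < (Real.pi*(1+y^2))⁻¹),
        abs_of_nonneg hlog0]
      have h3 : Real.log (1+((y-η)/σ)^2) ≤ 4 * ((2+2*η^2) * (1+y^2)) ^ ((1:ℝ)/4) := by
        have hb := Real.log_le_rpow_div (x := 1+((y-η)/σ)^2) (by positivity) (ε := (1:ℝ)/4)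
          (by norm_num)
        have hmono : (1+((y-η)/σ)^2 : ℝ) ^ ((1:ℝ)/4) ≤ ((2+2*η^2) * (1+y^2)) ^ ((1:ℝ)/4) := by
          apply Real.rpow_le_rpow (by positivity) _ (by norm_num)
          have hu : ((y-η)/σ)^2 ≤ (y-η)^2 := by
            rw [div_pow]
            rw [div_le_iff₀ (by positivity)]
            nlinarith [sq_nonneg (y-η), sq_nonneg (σ-1), mul_nonneg (sq_nonneg (y-η)) (sq_nonneg (σ-1))]
          nlinarith [sq_nonneg (y+η), sq_nonneg y, sq_nonneg η]
        calc Real.log (1+((y-η)/σ)^2) ≤ (1+((y-η)/σ)^2) ^ ((1:ℝ)/4) / (1/4) := hb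
          _ = 4 * (1+((y-η)/σ)^2) ^ ((1:ℝ)/4) := by ring
          _ ≤ 4 * ((2+2*η^2) * (1+y^2)) ^ ((1:ℝ)/4) := by linarith
      have hsplit : ((2+2*η^2) * (1+y^2) : ℝ) ^ ((1:ℝ)/4)
          = (2+2*η^2 : ℝ)^((1:ℝ)/4) * ((1:ℝ)+y^2)^((1:ℝ)/4) :=
        Real.mul_rpow (by positivity) (by positivity)
      have key : ((1:ℝ)+y^2)^(-(3:ℝ)/4) = (1+y^2)⁻¹ * (1+y^2)^((1:ℝ)/4) := by
        rw [← Real.rpow_neg_one (1+y^2), ← Real.rpow_add hy]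
        norm_num
      calc (Real.pi*(1+y^2))⁻¹ * Real.log (1+((y-η)/σ)^2)
          ≤ (Real.pi*(1+y^2))⁻¹ * (4 * ((2+2*η^2) * (1+y^2)) ^ ((1:ℝ)/4)) :=
            mul_le_mul_of_nonneg_left h3 (by positivity)
        _ = (4*(2+2*η^2)^((1:ℝ)/4)/Real.pi) * ((1:ℝ)+y^2)^(-(3:ℝ)/4) := by
            rw [hsplit, key, mul_inv]
            field_simp
    · exact int_pow34.const_mul _
    · apply Eventually.of_forall
      intro y
      have hin : Tendsto (fun σ : ℝ => 1 + ((y-η)/σ)^2) atTop (𝓝 (1+0^2)) :=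
        tendsto_const_nhds.add ((tendsto_const_nhds.div_atTop tendsto_id).pow 2)
      norm_num at hin
      have hlog := (Real.continuousAt_log (one_ne_zero)).tendsto.comp hin
      rw [Real.log_one] at hlog
      have := hlog.const_mul ((Real.pi*(1+y^2))⁻¹)
      rw [mul_zero] at this
      exact this
  rw [integral_zero] at hz
  exact hz

lemma I_eq (η σ : ℝ) (hσ : 0 < σ) :
    ∫ y : ℝ, (Real.pi*(1+y^2))⁻¹ * Real.log ((y-η)^2+σ^2) = Real.log ((1+σ)^2+η^2) := by
  set h : ℝ → ℝ := fun s =>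
    (∫ y : ℝ, (Real.pi*(1+y^2))⁻¹ * Real.log ((y-η)^2+s^2)) - Real.log ((1+s)^2+η^2) with hh
  have hderiv : ∀ s : ℝ, 0 < s → HasDerivAt h 0 s := by
    intro s hs
    have hE : (0:ℝ) < (1+s)^2+η^2 := by positivity
    have hlogE : HasDerivAt (fun s : ℝ => Real.log ((1+s)^2+η^2))
        (2*(1+s)/((1+s)^2+η^2)) s := by
      have hin : HasDerivAt (fun s : ℝ => (1+s)^2+η^2) (2*(1+s)) s := by
        simpa using (((hasDerivAt_id s).const_add 1).pow 2).add_const (η^2)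
      exact hin.log hE.ne'
    have h2 := (I_hasDeriv η s hs).sub hlogE
    rw [sub_self] at h2
    exact h2
  have hconst : ∀ T, σ ≤ T → h T = h σ := by
    intro T hT
    have := constant_of_has_deriv_right_zero (f := h) (a := σ) (b := T)
      (fun x hx => ((hderiv x (lt_of_lt_of_le hσ hx.1)).continuousAt).continuousWithinAt)
      (fun x hx => (hderiv x (lt_of_lt_of_le hσ hx.1)).hasDerivWithinAt)
    exact this T ⟨hT, le_refl T⟩
  have htends : Tendsto h atTop (𝓝 0) := by
    have hsub := (I_tail η).sub (logE_tail η)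
    rw [sub_zero] at hsub
    apply hsub.congr
    intro s
    rw [hh]
    ring
  have hσ0 : h σ = 0 := by
    have hT : Tendsto (fun T : ℝ => h σ) atTop (𝓝 0) := by
      apply htends.congr'
      filter_upwards [eventually_ge_atTop σ] with T hT
      exact hconst T hT
    exact tendsto_nhds_unique tendsto_const_nhds hT
  have : (∫ y : ℝ, (Real.pi*(1+y^2))⁻¹ * Real.log ((y-η)^2+σ^2))
      - Real.log ((1+σ)^2+η^2) = 0 := hσ0
  linarith

lemma kl_eq (η σ : ℝ) (hσ : 0 < σ) :
    klDiv (cauchy 0 1) (cauchy η σ) = Real.log (((1 + σ) ^ 2 + η ^ 2) / (4 * σ)) := by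
  have hπ := Real.pi_pos
  have hE : (0:ℝ) < (1+σ)^2+η^2 := by positivity
  have hpt : ∀ y : ℝ, cauchy 0 1 y * Real.log (cauchy 0 1 y / cauchy η σ y)
      = (Real.pi*(1+y^2))⁻¹ * Real.log ((y-η)^2+σ^2)
        - (Real.pi*(1+y^2))⁻¹ * Real.log σ
        - (Real.pi*(1+y^2))⁻¹ * Real.log ((y-0)^2+1^2) := by
    intro y
    have hy : (0:ℝ) < 1+y^2 := by positivity
    have h5 : (0:ℝ) < (y-η)^2+σ^2 := add_pos_of_nonneg_of_pos (sq_nonneg _) (pow_pos hσ 2)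
    have hc1 : cauchy 0 1 y = (Real.pi*(1+y^2))⁻¹ := by
      simp [cauchy, one_div]
    have hc2 : cauchy 0 1 y / cauchy η σ y = ((y-η)^2+σ^2)/(σ*(1+y^2)) := by
      simp only [cauchy]
      have h6 : (0:ℝ) < 1 + ((y-η)/σ)^2 := by positivity
      rw [div_div_div_eq]
      field_simp
      ring
    rw [hc2, hc1, Real.log_div h5.ne' (by positivity), Real.log_mul hσ.ne' hy.ne',
      show ((y:ℝ)-0)^2+1^2 = 1+y^2 from by ring]
    ring
  rw [klDiv]
  rw [show (fun y => cauchy 0 1 y * Real.log (cauchy 0 1 y / cauchy η σ y))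
      = fun y : ℝ => (Real.pi*(1+y^2))⁻¹ * Real.log ((y-η)^2+σ^2)
        - (Real.pi*(1+y^2))⁻¹ * Real.log σ
        - (Real.pi*(1+y^2))⁻¹ * Real.log ((y-0)^2+1^2) from funext hpt]
  have hB : Integrable (fun y : ℝ => (Real.pi*(1+y^2))⁻¹ * Real.log σ) :=
    integrable_p.mul_const (Real.log σ)
  have hAB : Integrable (fun y : ℝ => (Real.pi*(1+y^2))⁻¹ * Real.log ((y-η)^2+σ^2)
      - (Real.pi*(1+y^2))⁻¹ * Real.log σ) := (integrable_p_log η σ hσ).sub hB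
  have hC : Integrable (fun y : ℝ => (Real.pi*(1+y^2))⁻¹ * Real.log ((y-0)^2+1^2)) :=
    integrable_p_log 0 1 one_pos
  rw [integral_sub hAB hC,
    integral_sub (integrable_p_log η σ hσ) hB,
    integral_mul_const, p_integral, I_eq η σ hσ, I_eq 0 1 one_pos]
  rw [Real.log_div hE.ne' (by positivity : ((4:ℝ)*σ) ≠ 0),
    Real.log_mul (by norm_num : (4:ℝ) ≠ 0) hσ.ne']
  norm_num
  ring

/-- the Kullback–Leibler divergence between Cauchy densities has the closed
form `D(f_{0,1}‖f_{η,σ}) = log[((1+σ)² + η²)/(4σ)]`; consequently it is twice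
differentiable in `(η,σ)` at `(0,1)` and `O(η² + (σ-1)²)` as `(η,σ) → (0,1)`. -/
theorem cauchy_kl_closed_form :
    (∀ η σ : ℝ, 0 < σ →
      klDiv (cauchy 0 1) (cauchy η σ) = Real.log (((1 + σ) ^ 2 + η ^ 2) / (4 * σ))) ∧
    ContDiffAt ℝ 2 (fun θ : ℝ × ℝ => klDiv (cauchy 0 1) (cauchy θ.1 θ.2))
      ((0 : ℝ), (1 : ℝ)) ∧
    (fun θ : ℝ × ℝ => klDiv (cauchy 0 1) (cauchy θ.1 θ.2))
      =O[𝓝 ((0 : ℝ), (1 : ℝ))] (fun θ : ℝ × ℝ => θ.1 ^ 2 + (θ.2 - 1) ^ 2) := by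
  have hev : (fun θ : ℝ × ℝ => klDiv (cauchy 0 1) (cauchy θ.1 θ.2))
      =ᶠ[𝓝 ((0:ℝ),(1:ℝ))] (fun θ : ℝ × ℝ => Real.log (((1+θ.2)^2+θ.1^2)/(4*θ.2))) := by
    have hopen : ∀ᶠ θ : ℝ × ℝ in 𝓝 ((0:ℝ),(1:ℝ)), 0 < θ.2 :=
      (isOpen_lt continuous_const continuous_snd).mem_nhds (by norm_num)
    filter_upwards [hopen] with θ hθ
    exact kl_eq θ.1 θ.2 hθ
  refine ⟨fun η σ h => kl_eq η σ h, ?_, ?_⟩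
  · have hf : ContDiffAt ℝ 2 (fun θ : ℝ × ℝ => ((1+θ.2)^2+θ.1^2)/(4*θ.2)) ((0:ℝ),(1:ℝ)) := by
      apply ContDiffAt.div
      · exact (((contDiff_const.add contDiff_snd).pow 2).add (contDiff_fst.pow 2)).contDiffAt
      · exact (contDiff_const.mul contDiff_snd).contDiffAt
      · norm_num
    have hlog : ContDiffAt ℝ 2
        (fun θ : ℝ × ℝ => Real.log (((1+θ.2)^2+θ.1^2)/(4*θ.2))) ((0:ℝ),(1:ℝ)) :=
      hf.log (by norm_num)
    exact hlog.congr_of_eventuallyEq hev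
  · rw [isBigO_iff]
    refine ⟨1, ?_⟩
    have h2 : ∀ᶠ θ : ℝ × ℝ in 𝓝 ((0:ℝ),(1:ℝ)), (1:ℝ)/2 < θ.2 :=
      (isOpen_lt continuous_const continuous_snd).mem_nhds (by norm_num)
    filter_upwards [hev, h2] with θ hθeq hθ2
    have hσ : 0 < θ.2 := by linarith
    have harg : ((1+θ.2)^2+θ.1^2)/(4*θ.2) = 1 + (θ.1^2+(θ.2-1)^2)/(4*θ.2) := by
      field_simp
      ring
    have hnn : 0 ≤ (θ.1^2+(θ.2-1)^2)/(4*θ.2) := by positivity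
    have hx1 : (1:ℝ) ≤ ((1+θ.2)^2+θ.1^2)/(4*θ.2) := by rw [harg]; linarith
    rw [hθeq, Real.norm_eq_abs, Real.norm_eq_abs, abs_of_nonneg (Real.log_nonneg hx1),
      abs_of_nonneg (by positivity : (0:ℝ) ≤ θ.1^2+(θ.2-1)^2), one_mul]
    have hlogle := Real.log_le_sub_one_of_pos (by linarith : (0:ℝ) < ((1+θ.2)^2+θ.1^2)/(4*θ.2))
    have hle : ((1+θ.2)^2+θ.1^2)/(4*θ.2) - 1 ≤ θ.1^2+(θ.2-1)^2 := by
      rw [harg]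
      have hds : (θ.1^2+(θ.2-1)^2)/(4*θ.2) ≤ θ.1^2+(θ.2-1)^2 :=
        div_le_self (by positivity) (by linarith)
      linarith
    linarith
end
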